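/- arXiv:0808.3599 — 3 statements merged into one kernel-verified Lean document; each statement's English description precedes it below -/
import Mathlib

section
/- Let A be a measurable set of paths such that the event {S_0 ∈ A} is increasing with respect to the Bernoulli arrow variables (ξ_z) and such that P_{1/2}(S_0 ∈ A) = 0, and set θ_A(p) = P_p(S_0 ∈ A). Let N_A be the cardinality of the set {τ ∈ [0,1] : S_0^τ ∈ A} in the dynamical discrete web. If there exists c < ∞ such that θ_A(p) ≤ c(p − 1/2) for all p ≥ 1/2, then E(N_A) < ∞. -/
open MeasureTheory ProbabilityTheory Filter Set
open scoped ENNReal NNReal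

noncomputable section

namespace DyDWPaper

/-- Linear interpolation of a discrete-time path at real times `t ≥ 0`. -/
def interp (w : ℕ → ℤ) (t : ℝ) : ℝ :=
  ((⌊t⌋₊ + 1 : ℝ) - t) * (w ⌊t⌋₊ : ℝ) + (t - (⌊t⌋₊ : ℝ)) * (w (⌊t⌋₊ + 1) : ℝ)

/-- Diffusive rescaling `π̃(t) = δ·π(t/δ²)`. -/
def rescale (δ : ℝ) (f : ℝ → ℝ) : ℝ → ℝ := fun t => δ * f (t / δ ^ 2)

/-- The event `O = {π : π(t) > −1 on [0,1] and π(1) > 1}`. -/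
def OEvent (f : ℝ → ℝ) : Prop := (∀ t ∈ Set.Icc (0 : ℝ) 1, f t > -1) ∧ f 1 > 1

/-- The `r`-neighbourhood `O + r` of `O` in sup norm on `C([0,1])`. -/
def OPlus (r : ℝ) : Set (ℝ → ℝ) :=
  {f | ∃ g : ℝ → ℝ, ContinuousOn g (Set.Icc (0 : ℝ) 1) ∧ OEvent g ∧
    ∀ t ∈ Set.Icc (0 : ℝ) 1, |f t - g t| ≤ r}

/-- A model of the dynamical discrete web: i.i.d. (over even sites of `ℤ²`) arrow
processes, each one a stationary right-continuous `{±1}`-valued Markov jump process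
in the dynamical time `τ`, switching at rate `1/2` (uniform resampling at rate 1). -/
structure Model (Ω : Type) [MeasurableSpace Ω] where
  P : Measure Ω
  prob : IsProbabilityMeasure P
  ξ : ℤ × ℤ → ℝ → Ω → ℤ
  vals : ∀ z τ ω, 0 ≤ τ → Even (z.1 + z.2) → ξ z τ ω = 1 ∨ ξ z τ ω = -1
  meas : ∀ z τ, Measurable (ξ z τ)
  rightCont : ∀ ω z τ, 0 ≤ τ → Even (z.1 + z.2) →
    ∃ ε > 0, ∀ τ', τ ≤ τ' → τ' < τ + ε → ξ z τ' ω = ξ z τ ω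
  fdd : ∀ z, Even (z.1 + z.2) → ∀ (n : ℕ) (τ : Fin (n + 1) → ℝ),
    0 ≤ τ 0 → StrictMono τ → ∀ e : Fin (n + 1) → ℤ, (∀ i, e i = 1 ∨ e i = -1) →
    (P {ω | ∀ i, ξ z (τ i) ω = e i}).toReal =
      (1 / 2) * ∏ i : Fin n,
        (if e i.succ = e i.castSucc
          then (1 + Real.exp (-(τ i.succ - τ i.castSucc))) / 2
          else (1 - Real.exp (-(τ i.succ - τ i.castSucc))) / 2)
  indep : iIndepFun
    (fun (z : {z : ℤ × ℤ // Even (z.1 + z.2)}) ω => fun τ : ℝ => ξ z.1 τ ω) P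

variable {Ω Ω' : Type} [MeasurableSpace Ω] [MeasurableSpace Ω']

/-- The discrete random walk started from `(x,s) ∈ ℤ²_even` following the arrows at
dynamical time `τ`; `walk ω τ x s n` is its position at (absolute) time `s + n`. -/
def Model.walk (M : Model Ω) (ω : Ω) (τ : ℝ) (x s : ℤ) : ℕ → ℤ
  | 0 => x
  | n + 1 => M.walk ω τ x s n + M.ξ (M.walk ω τ x s n, s + (n : ℤ)) τ ω

/-- The walk from `(x,s)` as a real-time path (linear interpolation), evaluated at
absolute time `t ≥ s`. -/
def Model.path (M : Model Ω) (ω : Ω) (τ : ℝ) (x s : ℤ) (t : ℝ) : ℝ :=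
  interp (fun n => M.walk ω τ x s n) (t - (s : ℝ))

/-- The path `S₀^τ` from the origin, interpolated to real times. -/
def Model.S0 (M : Model Ω) (τ : ℝ) (ω : Ω) : ℝ → ℝ :=
  fun t => interp (fun n => M.walk ω τ 0 0 n) t

/-- A simple symmetric random walk: i.i.d. uniform `{±1}` increments `X n`. -/
structure RW (Ω : Type) [MeasurableSpace Ω] where
  P : Measure Ω
  prob : IsProbabilityMeasure P
  X : ℕ → Ω → ℤ
  vals : ∀ n ω, X n ω = 1 ∨ X n ω = -1
  meas : ∀ n, Measurable (X n)
  indep : iIndepFun X P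
  fair : ∀ n, P {ω | X n ω = 1} = 1 / 2

def RW.S (R : RW Ω) (n : ℕ) (ω : Ω) : ℤ := ∑ i ∈ Finset.range n, R.X i ω

def RW.path (R : RW Ω) (ω : Ω) : ℝ → ℝ := interp fun n => R.S n ω

/-- The static discrete web with parameter `p`: i.i.d. arrows over even sites,
right with probability `p`. -/
structure StaticModel (Ω : Type) [MeasurableSpace Ω] (p : ℝ) where
  P : MeasureTheory.Measure Ω
  prob : MeasureTheory.IsProbabilityMeasure P
  ξ : ℤ × ℤ → Ω → ℤ
  vals : ∀ z ω, Even (z.1 + z.2) → ξ z ω = 1 ∨ ξ z ω = -1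
  meas : ∀ z, Measurable (ξ z)
  indep : ProbabilityTheory.iIndepFun
    (fun (z : {z : ℤ × ℤ // Even (z.1 + z.2)}) ω => ξ z.1 ω) P
  marginal : ∀ z, Even (z.1 + z.2) → P {ω | ξ z ω = 1} = ENNReal.ofReal p

/-- The deterministic walk from the origin reading off an arrow configuration `c`. -/
def walkOf (c : ℤ × ℤ → ℤ) : ℕ → ℤ
  | 0 => 0
  | n + 1 => walkOf c n + c (walkOf c n, (n : ℤ))

def StaticModel.walk {Ω : Type} [MeasurableSpace Ω] {p : ℝ} (SM : StaticModel Ω p)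
    (ω : Ω) : ℕ → ℤ := walkOf fun z => SM.ξ z ω

/-- A simple random walk with probability `p` for a `+1` increment. -/
structure RWp (Ω : Type) [MeasurableSpace Ω] (p : ℝ) where
  P : MeasureTheory.Measure Ω
  prob : MeasureTheory.IsProbabilityMeasure P
  X : ℕ → Ω → ℤ
  vals : ∀ n ω, X n ω = 1 ∨ X n ω = -1
  meas : ∀ n, Measurable (X n)
  indep : ProbabilityTheory.iIndepFun X P
  marginal : ∀ n, P {ω | X n ω = 1} = ENNReal.ofReal p

def RWp.S {Ω : Type} [MeasurableSpace Ω] {p : ℝ} (R : RWp Ω p) (n : ℕ) (ω : Ω) : ℤ :=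
  ∑ i ∈ Finset.range n, R.X i ω

/-- A standard one-dimensional Brownian motion started at `0`. -/
structure BM (Ω : Type) [MeasurableSpace Ω] where
  P : MeasureTheory.Measure Ω
  prob : MeasureTheory.IsProbabilityMeasure P
  B : ℝ → Ω → ℝ
  meas : ∀ t, Measurable (B t)
  start : ∀ ω, B 0 ω = 0
  cont : ∀ ω, Continuous fun t => B t ω
  incr : ∀ s t : ℝ, 0 ≤ s → s ≤ t →
    MeasureTheory.Measure.map (fun ω => B t ω - B s ω) P =
      ProbabilityTheory.gaussianReal 0 ((t - s).toNNReal)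
  indepIncr : ∀ (n : ℕ) (t : Fin (n + 1) → ℝ), 0 ≤ t 0 → StrictMono t →
    ProbabilityTheory.iIndepFun
      (fun (i : Fin n) ω => B (t i.succ) ω - B (t i.castSucc) ω) P

/-- `K(γ) = (γ−2)√((γ+1)/(γ−1))`. -/
def Kfun (γ : ℝ) : ℝ := (γ - 2) * Real.sqrt ((γ + 1) / (γ - 1))

/-- `γ(K)`, the solution in `(2,∞)` of `K(γ) = K` (as a supremum, which coincides
with the unique solution for `K > 0`). -/
def gammaOf (K : ℝ) : ℝ := sSup {g : ℝ | 2 < g ∧ Kfun g ≤ K}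

/-- `d_k = 2(⌊γ^k/2⌋+1)`. -/
def dseq (γ : ℝ) (k : ℕ) : ℤ := 2 * (⌊γ ^ k / 2⌋ + 1)

/-- `t_n = d_0² + ⋯ + d_{n−1}²`. -/
def tseq (γ : ℝ) (n : ℕ) : ℤ := ∑ k ∈ Finset.range n, dseq γ k ^ 2

/-- `x_n = d_0 + ⋯ + d_{n−1}`. -/
def xseq (γ : ℝ) (n : ℕ) : ℤ := ∑ k ∈ Finset.range n, dseq γ k

/-- The right-continuous step function `∂^γ`, equal to `x_n − d_n` on `[t_n, t_{n+1})`. -/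
def boundary (γ : ℝ) (t : ℝ) : ℝ :=
  ((xseq γ (sSup {n : ℕ | ((tseq γ n : ℝ)) ≤ t}) : ℝ)) -
    ((dseq γ (sSup {n : ℕ | ((tseq γ n : ℝ)) ≤ t}) : ℝ))

variable {Ω : Type} [MeasurableSpace Ω]

/-- The event `A_k^τ`: the walk of the dynamical web at dynamical time `τ` started from
`z̄_k = (x_k, t_k)` stays strictly to the right of `x_k − d_k` on `[t_k, t_{k+1}]` and is
strictly to the right of `x_{k+1}` at time `t_{k+1}`. -/
def Aevent (M : Model Ω) (γ : ℝ) (k : ℕ) (τ : ℝ) : Set Ω :=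
  {ω | (∀ t ∈ Set.Icc ((tseq γ k : ℝ)) ((tseq γ (k + 1) : ℝ)),
      M.path ω τ (xseq γ k) (tseq γ k) t > ((xseq γ k : ℝ) - (dseq γ k : ℝ))) ∧
    M.path ω τ (xseq γ k) (tseq γ k) ((tseq γ (k + 1) : ℝ)) > (xseq γ (k + 1) : ℝ)}

/-- `γ₀ = sup_{k,K} 1/P(A_k(K))`. -/
def gam0 (M : Model Ω) : ℝ :=
  ⨆ k : ℕ, ⨆ K : {K : ℝ // 0 < K}, ((M.P (Aevent M (gammaOf K.1) k 0)).toReal)⁻¹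

/-- `f(p,K)` from the first-passage asymptotics of Brownian motion below a square-root
boundary; the sum is over `n ≥ 1`. -/
def fseq (p K : ℝ) : ℝ :=
  Real.sin (Real.pi * p / 2) * Real.Gamma (1 + p / 2) / Real.pi *
    ∑' n : ℕ, (Real.sqrt 2 * K) ^ (n + 1) / ((n + 1).factorial : ℝ) *
      Real.Gamma ((((n : ℝ) + 1) - p) / 2)

/-- `p(K)`, the solution in `(0,1)` of `f(p,K) = 1` (as an infimum, which coincides
with the unique solution). -/
def pOf (K : ℝ) : ℝ := sInf {p : ℝ | p ∈ Set.Ioo (0 : ℝ) 1 ∧ fseq p K = 1}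

/-- A path is `K⁺`-subdiffusive iff `π(t) ≥ −j − K√t` for all `t > 0`, for some `j ≥ 0`. -/
def KSubdiffusive (K : ℝ) (π : ℝ → ℝ) : Prop :=
  ∃ j : ℝ, 0 ≤ j ∧ ∀ t : ℝ, 0 < t → π t ≥ -j - K * Real.sqrt t

/-- A path is subdiffusive iff for some finite `K > 0`, `liminf π(t)/√t ≥ −K` or
`limsup π(t)/√t ≤ K`. -/
def Subdiffusive (π : ℝ → ℝ) : Prop :=
  ∃ K : ℝ, 0 < K ∧
    ((-(K : EReal) ≤ Filter.liminf (fun t : ℝ => ((π t / Real.sqrt t : ℝ) : EReal)) Filter.atTop) ∨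
      Filter.limsup (fun t : ℝ => ((π t / Real.sqrt t : ℝ) : EReal)) Filter.atTop ≤ (K : EReal))

/-- The law of the iterated logarithm for a path. -/
def SatisfiesLIL (π : ℝ → ℝ) : Prop :=
  Filter.limsup
      (fun t : ℝ => ((π t / Real.sqrt (2 * t * Real.log (Real.log t)) : ℝ) : EReal))
      Filter.atTop = 1 ∧
  Filter.liminf
      (fun t : ℝ => ((π t / Real.sqrt (2 * t * Real.log (Real.log t)) : ℝ) : EReal))
      Filter.atTop = -1

/-- Modulus of continuity on `[0,1]`. -/
def modulus (f : ℝ → ℝ) (ε : ℝ) : ℝ :=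
  sSup {d : ℝ | ∃ s ∈ Set.Icc (0 : ℝ) 1, ∃ t ∈ Set.Icc (0 : ℝ) 1, |s - t| < ε ∧ d = |f t - f s|}

/-- `l(t) = #{i ≤ t : S_d(i) = S_d'(i)}`. -/
def coalCount (Sd Sd' : ℕ → Ω → ℤ) (ω : Ω) (t : ℕ) : ℕ :=
  ((Finset.range (t + 1)).filter fun i => Sd i ω = Sd' i ω).card

/-- `F(t) = t + Σ_{k ≤ l(t)} ΔT_k`. -/
def clockSum (Sd Sd' : ℕ → Ω → ℤ) (ΔT : ℕ → Ω → ℕ) (ω : Ω) (t : ℕ) : ℕ :=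
  t + ∑ k ∈ Finset.range (coalCount Sd Sd' ω t + 1), ΔT k ω

/-- The right-continuous inverse `C(u) = inf{t : F(t) > u}` (discrete time). -/
def rcInv (Sd Sd' : ℕ → Ω → ℤ) (ΔT : ℕ → Ω → ℕ) (ω : Ω) (u : ℕ) : ℕ :=
  sInf {t : ℕ | u < clockSum Sd Sd' ΔT ω t}

/-- The right-continuous inverse `C(u) = inf{t : F(t) > u}` at a real argument. -/
def rcInvR (Sd Sd' : ℕ → Ω → ℤ) (ΔT : ℕ → Ω → ℕ) (ω : Ω) (u : ℝ) : ℕ :=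
  sInf {t : ℕ | u < (clockSum Sd Sd' ΔT ω t : ℝ)}

/-- The `α`-energy of a measure on `[0,1]`. -/
def energy (α : ℝ) (σ : MeasureTheory.Measure ℝ) : ℝ≥0∞ :=
  ∫⁻ τ in Set.Icc (0 : ℝ) 1, ∫⁻ τ' in Set.Icc (0 : ℝ) 1,
    (ENNReal.ofReal |τ - τ'|) ^ (-α) ∂σ ∂σ
-- AUX DEVELOPMENT (to be inserted before the theorem)
section Aux

variable {Ω : Type} [MeasurableSpace Ω]

open Classical in
/-- The countable "rational" dense subset of the `i`-th dyadic-ish interval. -/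
def Dset (n i : ℕ) : Set ℝ :=
  Set.Icc ((i : ℝ) / n) (((i : ℝ) + 1) / n) ∩ Set.range ((↑) : ℚ → ℝ)

lemma Dset_countable (n i : ℕ) : (Dset n i).Countable :=
  (Set.countable_range _).mono Set.inter_subset_right

open Classical in
/-- `1` if the trajectory takes value `1` somewhere on `D`, else `-1`. -/
def fD (D : Set ℝ) (g : ℝ → ℤ) : ℤ := if ∃ q ∈ D, g q = 1 then 1 else -1

lemma measurable_fD (D : Set ℝ) (hD : D.Countable) : Measurable (fD D) := by
  classical
  have hS : MeasurableSet {g : ℝ → ℤ | ∃ q ∈ D, g q = 1} := by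
    have : {g : ℝ → ℤ | ∃ q ∈ D, g q = 1} = ⋃ q ∈ D, (fun g : ℝ → ℤ => g q) ⁻¹' {1} := by
      ext g; simp
    rw [this]
    exact MeasurableSet.biUnion hD fun q _ => (measurable_pi_apply q) (measurableSet_singleton 1)
  have : fD D = fun g => if g ∈ {g : ℝ → ℤ | ∃ q ∈ D, g q = 1} then (1 : ℤ) else -1 := rfl
  rw [this]
  exact Measurable.ite hS measurable_const measurable_const

open Classical in
/-- The monotone-coupling arrow configuration on the interval `[i/n, (i+1)/n]`. -/
def hatXi (M : Model Ω) (n i : ℕ) (z : ℤ × ℤ) (ω : Ω) : ℤ :=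
  if Even (z.1 + z.2) then fD (Dset n i) (fun τ => M.ξ z τ ω) else 1

lemma hatXi_vals (M : Model Ω) (n i : ℕ) (z : ℤ × ℤ) (ω : Ω) :
    hatXi M n i z ω = 1 ∨ hatXi M n i z ω = -1 := by
  unfold hatXi fD; split_ifs <;> simp

lemma measurable_hatXi (M : Model Ω) (n i : ℕ) (z : ℤ × ℤ) :
    Measurable (hatXi M n i z) := by
  unfold hatXi
  split_ifs with h
  · exact (measurable_fD _ (Dset_countable n i)).comp
      (measurable_pi_lambda _ fun τ => M.meas z τ)
  · exact measurable_const

/-- Measurability of the walk read off a measurable family of arrows. -/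
lemma measurable_walkOf {ξ : ℤ × ℤ → Ω → ℤ} (h : ∀ z, Measurable (ξ z)) (k : ℕ) :
    Measurable (fun ω => walkOf (fun z => ξ z ω) k) := by
  induction k with
  | zero => simpa [walkOf] using measurable_const
  | succ k ih =>
    have key : Measurable (fun ω => ξ (walkOf (fun z => ξ z ω) k, (k : ℤ)) ω) := by
      apply measurable_to_countable'
      intro t
      have : (fun ω => ξ (walkOf (fun z => ξ z ω) k, (k : ℤ)) ω) ⁻¹' {t} =
          ⋃ v : ℤ, ({ω | walkOf (fun z => ξ z ω) k = v} ∩ ξ (v, (k : ℤ)) ⁻¹' {t}) := by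
        ext ω
        simp only [Set.mem_preimage, Set.mem_singleton_iff, Set.mem_iUnion, Set.mem_inter_iff,
          Set.mem_setOf_eq]
        constructor
        · intro ht; exact ⟨_, rfl, ht⟩
        · rintro ⟨v, hv, ht⟩; rw [hv]; exact ht
      rw [this]
      exact MeasurableSet.iUnion fun v =>
        (ih (measurableSet_singleton v)).inter ((h _) (measurableSet_singleton t))
    show Measurable (fun ω => walkOf (fun z => ξ z ω) k + ξ (walkOf (fun z => ξ z ω) k, (k : ℤ)) ω)
    exact ih.add key

/-- The bad event for interval `i` of `n`. -/
def Gset (M : Model Ω) (A : Set (ℕ → ℤ)) (n i : ℕ) : Set Ω :=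
  {ω | (fun k => walkOf (fun z => hatXi M n i z ω) k) ∈ A}

lemma measurable_Gset (M : Model Ω) (A : Set (ℕ → ℤ)) (hA : MeasurableSet A) (n i : ℕ) :
    MeasurableSet (Gset M A n i) := by
  have : Measurable (fun ω => (fun k => walkOf (fun z => hatXi M n i z ω) k)) :=
    measurable_pi_lambda _ fun k => measurable_walkOf (measurable_hatXi M n i) k
  exact this hA

end Aux
section Aux2

variable {Ω : Type} [MeasurableSpace Ω]

/-- The fdd formula for "all `-1` on a finite set of times". -/
lemma prob_allNeg (M : Model Ω) (z : ℤ × ℤ) (hz : Even (z.1 + z.2))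
    (s : Finset ℝ) (mm : ℕ) (hcard : s.card = mm + 1) (hpos : ∀ x ∈ s, 0 ≤ x) :
    (M.P {ω | ∀ x ∈ s, M.ξ z x ω = -1}).toReal =
      (1 / 2) * ∏ j : Fin mm,
        (1 + Real.exp (-((s.orderEmbOfFin hcard j.succ : ℝ) -
          (s.orderEmbOfFin hcard j.castSucc : ℝ)))) / 2 := by
  have hmono : StrictMono (s.orderEmbOfFin hcard) := (s.orderEmbOfFin hcard).strictMono
  have hmem : ∀ j, (s.orderEmbOfFin hcard j : ℝ) ∈ s := fun j => Finset.orderEmbOfFin_mem _ _ _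
  have h0 : (0 : ℝ) ≤ s.orderEmbOfFin hcard 0 := hpos _ (hmem 0)
  have hset : {ω | ∀ j : Fin (mm + 1), M.ξ z (s.orderEmbOfFin hcard j) ω = (fun _ => (-1 : ℤ)) j}
      = {ω | ∀ x ∈ s, M.ξ z x ω = -1} := by
    ext ω
    simp only [Set.mem_setOf_eq]
    constructor
    · intro h x hx
      have : x ∈ Set.range (s.orderEmbOfFin hcard) := by
        rw [Finset.range_orderEmbOfFin]; exact hx
      obtain ⟨j, rfl⟩ := this
      exact h j
    · intro h j; exact h _ (hmem j)
  have := M.fdd z hz mm (fun j => s.orderEmbOfFin hcard j) h0 hmono (fun _ => -1)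
    (fun _ => Or.inr rfl)
  rw [hset] at this
  rw [this]
  simp

/-- The value is the same for all even sites. -/
lemma prob_allNeg_eq (M : Model Ω) (z z' : ℤ × ℤ) (hz : Even (z.1 + z.2))
    (hz' : Even (z'.1 + z'.2)) (s : Finset ℝ) (hpos : ∀ x ∈ s, 0 ≤ x) :
    M.P {ω | ∀ x ∈ s, M.ξ z x ω = -1} = M.P {ω | ∀ x ∈ s, M.ξ z' x ω = -1} := by
  haveI := M.prob
  rcases Finset.eq_empty_or_nonempty s with rfl | hne
  · simp
  · obtain ⟨mm, hmm⟩ : ∃ mm, s.card = mm + 1 := by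
      have := Finset.card_pos.2 hne; exact ⟨s.card - 1, by omega⟩
    have h1 := prob_allNeg M z hz s mm hmm hpos
    have h2 := prob_allNeg M z' hz' s mm hmm hpos
    exact (ENNReal.toReal_eq_toReal_iff' (measure_ne_top _ _) (measure_ne_top _ _)).mp
      (h1.trans h2.symm)

/-- Lower bound `e^{-(b-a)/2}/2` when the times are all in `[a,b]`. -/
lemma prob_allNeg_lb (M : Model Ω) (z : ℤ × ℤ) (hz : Even (z.1 + z.2))
    (s : Finset ℝ) (hne : s.Nonempty) (a b : ℝ) (ha : 0 ≤ a)
    (hs : ∀ x ∈ s, x ∈ Set.Icc a b) :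
    Real.exp (-(b - a) / 2) / 2 ≤ (M.P {ω | ∀ x ∈ s, M.ξ z x ω = -1}).toReal := by
  obtain ⟨mm, hmm⟩ : ∃ mm, s.card = mm + 1 := by
    have := Finset.card_pos.2 hne; exact ⟨s.card - 1, by omega⟩
  have hpos : ∀ x ∈ s, 0 ≤ x := fun x hx => le_trans ha (hs x hx).1
  rw [prob_allNeg M z hz s mm hmm hpos]
  set τ : Fin (mm + 1) → ℝ := fun j => s.orderEmbOfFin hmm j with hτ
  have hmem : ∀ j, τ j ∈ Set.Icc a b := fun j => hs _ (Finset.orderEmbOfFin_mem _ _ _)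
  have hfac : ∀ j : Fin mm, Real.exp (-(τ j.succ - τ j.castSucc) / 2) ≤
      (1 + Real.exp (-(τ j.succ - τ j.castSucc))) / 2 := by
    intro j
    set d := τ j.succ - τ j.castSucc
    have h := sq_nonneg (1 - Real.exp (-d / 2))
    have he : Real.exp (-d / 2) * Real.exp (-d / 2) = Real.exp (-d) := by
      rw [← Real.exp_add]; ring_nf
    nlinarith [Real.exp_pos (-d / 2)]
  -- telescoping sum
  set u : ℕ → ℝ := fun k => if h : k < mm + 1 then τ ⟨k, h⟩ else τ (Fin.last mm) with hu
  have hsucc : ∀ j : Fin mm, τ j.succ = u (j.val + 1) := by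
    intro j
    rw [hu]; simp only []
    rw [dif_pos (by omega : j.val + 1 < mm + 1)]
    congr 1
  have hcast : ∀ j : Fin mm, τ j.castSucc = u j.val := by
    intro j
    rw [hu]; simp only []
    rw [dif_pos (by omega : j.val < mm + 1)]
    congr 1
  have htel : ∑ j : Fin mm, (τ j.succ - τ j.castSucc) = τ (Fin.last mm) - τ 0 := by
    have h1 : ∑ j : Fin mm, (τ j.succ - τ j.castSucc)
        = ∑ j : Fin mm, (fun k : ℕ => u (k + 1) - u k) j.val := by
      refine Finset.sum_congr rfl fun j _ => ?_
      rw [hsucc j, hcast j]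
    rw [h1, Fin.sum_univ_eq_sum_range (fun k : ℕ => u (k + 1) - u k) mm,
      Finset.sum_range_sub u mm]
    have hmmval : u mm = τ (Fin.last mm) := by
      rw [hu]; simp only []; rw [dif_pos (by omega : mm < mm + 1)]; rfl
    have h0val : u 0 = τ 0 := by
      rw [hu]; simp only []; rw [dif_pos (by omega : 0 < mm + 1)]; rfl
    rw [hmmval, h0val]
  have hprod : Real.exp (-(τ (Fin.last mm) - τ 0) / 2) ≤
      ∏ j : Fin mm, (1 + Real.exp (-(τ j.succ - τ j.castSucc))) / 2 := by
    have h1 : ∏ j : Fin mm, Real.exp (-(τ j.succ - τ j.castSucc) / 2) =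
        Real.exp (∑ j : Fin mm, -(τ j.succ - τ j.castSucc) / 2) := (Real.exp_sum _ _).symm
    have h2 : ∑ j : Fin mm, -(τ j.succ - τ j.castSucc) / 2
        = -(τ (Fin.last mm) - τ 0) / 2 := by
      have : ∑ j : Fin mm, -(τ j.succ - τ j.castSucc) / 2
          = -(∑ j : Fin mm, (τ j.succ - τ j.castSucc)) / 2 := by
        rw [← Finset.sum_neg_distrib, Finset.sum_div]
      rw [this, htel]
    calc Real.exp (-(τ (Fin.last mm) - τ 0) / 2)
        = ∏ j : Fin mm, Real.exp (-(τ j.succ - τ j.castSucc) / 2) := by rw [h1, h2]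
      _ ≤ _ := Finset.prod_le_prod (fun j _ => (Real.exp_pos _).le) (fun j _ => hfac j)
  have hlast : τ (Fin.last mm) - τ 0 ≤ b - a := sub_le_sub (hmem _).2 (hmem _).1
  have h2 : Real.exp (-(b - a) / 2) ≤ Real.exp (-(τ (Fin.last mm) - τ 0) / 2) :=
    Real.exp_le_exp.2 (by linarith)
  linarith [hprod, h2]

end Aux2
section Aux3

variable {Ω : Type} [MeasurableSpace Ω]

/-- Bounds and site-invariance for "all `-1` on a countable set of times". -/
lemma probNegD (M : Model Ω) (a b : ℝ) (ha : 0 ≤ a) (hab : a ≤ b) (D : Set ℝ)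
    (hDc : D.Countable) (hDs : D ⊆ Set.Icc a b) (hne : D.Nonempty) :
    (∀ z : ℤ × ℤ, Even (z.1 + z.2) →
      ENNReal.ofReal (Real.exp (-(b - a) / 2) / 2) ≤ M.P {ω | ∀ q ∈ D, M.ξ z q ω = -1}) ∧
    (∀ z z' : ℤ × ℤ, Even (z.1 + z.2) → Even (z'.1 + z'.2) →
      M.P {ω | ∀ q ∈ D, M.ξ z q ω = -1} = M.P {ω | ∀ q ∈ D, M.ξ z' q ω = -1}) := by
  haveI := M.prob
  obtain ⟨f, rfl⟩ := Set.Countable.exists_eq_range hDc hne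
  set B : ℤ × ℤ → ℕ → Set Ω := fun z m => {ω | ∀ k < m, M.ξ z (f k) ω = -1} with hB
  have hBfin : ∀ z m, B z m =
      {ω | ∀ x ∈ Finset.image f (Finset.range m), M.ξ z x ω = -1} := by
    intro z m
    ext ω
    simp only [hB, Set.mem_setOf_eq, Finset.mem_image, Finset.mem_range]
    constructor
    · rintro h x ⟨k, hk, rfl⟩; exact h k hk
    · intro h k hk; exact h (f k) ⟨k, hk, rfl⟩
  have hBmeas : ∀ z m, MeasurableSet (B z m) := by
    intro z m
    have : B z m = ⋂ k ∈ {k : ℕ | k < m}, {ω | M.ξ z (f k) ω = -1} := by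
      ext ω; simp [hB]
    rw [this]
    exact MeasurableSet.biInter (Set.to_countable _)
      fun k _ => (M.meas z (f k)) (measurableSet_singleton (-1))
  have hBanti : ∀ z, Antitone (B z) := by
    intro z m m' hmm ω hω k hk
    exact hω k (lt_of_lt_of_le hk hmm)
  have hBint : ∀ z, (⋂ m, B z m) = {ω | ∀ q ∈ Set.range f, M.ξ z q ω = -1} := by
    intro z
    ext ω
    simp only [Set.mem_iInter, hB, Set.mem_setOf_eq, Set.mem_range]
    constructor
    · rintro h q ⟨k, rfl⟩; exact h (k + 1) k (Nat.lt_succ_self k)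
    · intro h m k _; exact h (f k) ⟨k, rfl⟩
  have htendsto : ∀ z, Filter.Tendsto (fun m => M.P (B z m)) Filter.atTop
      (nhds (M.P {ω | ∀ q ∈ Set.range f, M.ξ z q ω = -1})) := by
    intro z
    have := tendsto_measure_iInter_atTop (μ := M.P)
      (fun m => (hBmeas z m).nullMeasurableSet) (hBanti z) ⟨0, measure_ne_top _ _⟩
    rwa [hBint z] at this
  have hmemD : ∀ k, f k ∈ Set.Icc a b := fun k => hDs ⟨k, rfl⟩
  constructor
  · intro z hz
    refine ge_of_tendsto (htendsto z) (Filter.Eventually.of_forall fun m => ?_)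
    rcases Nat.eq_zero_or_pos m with rfl | hm
    · have : B z 0 = Set.univ := by ext ω; simp [hB]
      rw [this, measure_univ]
      exact ENNReal.ofReal_le_one.2 (by
        have : Real.exp (-(b - a) / 2) ≤ 1 :=
          Real.exp_le_one_iff.2 (by linarith)
        linarith)
    · rw [hBfin z m]
      have hsne : (Finset.image f (Finset.range m)).Nonempty :=
        ⟨f 0, Finset.mem_image.2 ⟨0, Finset.mem_range.2 hm, rfl⟩⟩
      have := prob_allNeg_lb M z hz (Finset.image f (Finset.range m)) hsne a b ha
        (by rintro x hx
            obtain ⟨k, _, rfl⟩ := Finset.mem_image.1 hx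
            exact hmemD k)
      exact ENNReal.ofReal_le_of_le_toReal this
  · intro z z' hz hz'
    have heq : (fun m => M.P (B z m)) = (fun m => M.P (B z' m)) := by
      funext m
      rw [hBfin z m, hBfin z' m]
      exact prob_allNeg_eq M z z' hz hz' _ (by
        rintro x hx
        obtain ⟨k, _, rfl⟩ := Finset.mem_image.1 hx
        exact le_trans ha (hmemD k).1)
    exact tendsto_nhds_unique (heq ▸ htendsto z) (htendsto z')

lemma hatXi_eq_one_iff (M : Model Ω) (n i : ℕ) (z : ℤ × ℤ) (hz : Even (z.1 + z.2)) (ω : Ω) :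
    hatXi M n i z ω = 1 ↔ ∃ q ∈ Dset n i, M.ξ z q ω = 1 := by
  unfold hatXi fD
  rw [if_pos hz]
  split_ifs with h
  · simp [h]
  · simp [h]

lemma Dset_subset (n i : ℕ) : Dset n i ⊆ Set.Icc ((i : ℝ) / n) (((i : ℝ) + 1) / n) :=
  Set.inter_subset_left

lemma Dset_left_mem (n i : ℕ) (hn : 0 < n) : (i : ℝ) / n ∈ Dset n i := by
  have hn' : (0 : ℝ) < n := Nat.cast_pos.2 hn
  refine ⟨⟨le_refl _, ?_⟩, ⟨(i : ℚ) / (n : ℚ), by push_cast; ring⟩⟩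
  exact (div_le_div_iff_of_pos_right hn').2 (by linarith)

lemma hatXi_one_compl (M : Model Ω) (n i : ℕ) (hn : 0 < n) (z : ℤ × ℤ)
    (hz : Even (z.1 + z.2)) :
    {ω | hatXi M n i z ω = 1} = {ω | ∀ q ∈ Dset n i, M.ξ z q ω = -1}ᶜ := by
  have hq0 : ∀ q ∈ Dset n i, (0 : ℝ) ≤ q := by
    intro q hq
    have := (Dset_subset n i hq).1
    have h0 : (0 : ℝ) ≤ (i : ℝ) / n := by positivity
    linarith
  ext ω
  simp only [Set.mem_setOf_eq, Set.mem_compl_iff]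
  rw [hatXi_eq_one_iff M n i z hz]
  constructor
  · rintro ⟨q, hq, hq1⟩ hall
    have := hall q hq
    rw [hq1] at this
    norm_num at this
  · intro h
    push_neg at h
    obtain ⟨q, hq, hqne⟩ := h
    refine ⟨q, hq, ?_⟩
    rcases M.vals (z) q ω (hq0 q hq) hz with h1 | h1
    · exact h1
    · exact absurd h1 hqne

end Aux3
section Aux4

variable {Ω : Type} [MeasurableSpace Ω]

lemma prob_single (M : Model Ω) (z : ℤ × ℤ) (hz : Even (z.1 + z.2)) (a : ℝ) (ha : 0 ≤ a) :
    (M.P {ω | M.ξ z a ω = 1}).toReal = 1 / 2 := by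
  have hsm : StrictMono (fun _ : Fin 1 => a) := Subsingleton.strictMono _
  have := M.fdd z hz 0 (fun _ => a) ha hsm (fun _ => 1) (fun _ => Or.inl rfl)
  have hset : {ω | ∀ j : Fin 1, M.ξ z a ω = (fun _ => (1:ℤ)) j} = {ω | M.ξ z a ω = 1} := by
    ext ω; simp
  rw [hset] at this
  simpa using this

lemma Nset_measurable (M : Model Ω) (n i : ℕ) (z : ℤ × ℤ) :
    MeasurableSet {ω | ∀ q ∈ Dset n i, M.ξ z q ω = -1} := by
  have : {ω | ∀ q ∈ Dset n i, M.ξ z q ω = -1}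
      = ⋂ q ∈ Dset n i, {ω | M.ξ z q ω = -1} := by ext ω; simp
  rw [this]
  exact MeasurableSet.biInter (Dset_countable n i)
    fun q _ => (M.meas z q) (measurableSet_singleton (-1))

lemma hat_facts (M : Model Ω) (n i : ℕ) (hn : 0 < n) :
    ∃ p : ℝ,
      (∀ z : ℤ × ℤ, Even (z.1 + z.2) →
        M.P {ω | hatXi M n i z ω = 1} = ENNReal.ofReal p) ∧
      1 / 2 ≤ p ∧ p ≤ 1 - Real.exp (-(1 / (n : ℝ)) / 2) / 2 := by
  haveI := M.prob
  have hn' : (0 : ℝ) < n := Nat.cast_pos.2 hn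
  set z₀ : ℤ × ℤ := (0, 0) with hz₀def
  have hz₀ : Even (z₀.1 + z₀.2) := by simp [hz₀def]
  set a : ℝ := (i : ℝ) / n with hadef
  set b : ℝ := ((i : ℝ) + 1) / n with hbdef
  have ha : 0 ≤ a := by positivity
  have hab : a ≤ b := (div_le_div_iff_of_pos_right hn').2 (by linarith)
  have hba : b - a = 1 / n := by
    rw [hbdef, hadef]; field_simp; ring
  have hD := probNegD M a b ha hab (Dset n i) (Dset_countable n i) (Dset_subset n i)
    ⟨a, Dset_left_mem n i hn⟩
  set p : ℝ := (M.P {ω | hatXi M n i z₀ ω = 1}).toReal with hpdef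
  have hco : ∀ z : ℤ × ℤ, Even (z.1 + z.2) → M.P {ω | hatXi M n i z ω = 1}
      = 1 - M.P {ω | ∀ q ∈ Dset n i, M.ξ z q ω = -1} := by
    intro z hz
    rw [hatXi_one_compl M n i hn z hz,
      measure_compl (Nset_measurable M n i z) (measure_ne_top _ _), measure_univ]
  refine ⟨p, ?_, ?_, ?_⟩
  · intro z hz
    have : M.P {ω | hatXi M n i z ω = 1} = M.P {ω | hatXi M n i z₀ ω = 1} := by
      rw [hco z hz, hco z₀ hz₀, hD.2 z z₀ hz hz₀]
    rw [this, hpdef, ENNReal.ofReal_toReal (measure_ne_top _ _)]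
  · have hsub : {ω | M.ξ z₀ a ω = 1} ⊆ {ω | hatXi M n i z₀ ω = 1} := by
      intro ω hω
      exact (hatXi_eq_one_iff M n i z₀ hz₀ ω).2 ⟨a, Dset_left_mem n i hn, hω⟩
    have := ENNReal.toReal_mono (measure_ne_top M.P _) (measure_mono hsub)
    rw [prob_single M z₀ hz₀ a ha] at this
    exact this
  · have hle : Real.exp (-(b - a) / 2) / 2
        ≤ (M.P {ω | ∀ q ∈ Dset n i, M.ξ z₀ q ω = -1}).toReal :=
      (ENNReal.ofReal_le_iff_le_toReal (measure_ne_top _ _)).1 (hD.1 z₀ hz₀)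
    have hfin : M.P {ω | ∀ q ∈ Dset n i, M.ξ z₀ q ω = -1} ≤ 1 :=
      le_trans (measure_mono (Set.subset_univ _)) (le_of_eq measure_univ)
    have := hco z₀ hz₀
    rw [hpdef, this, ENNReal.toReal_sub_of_le hfin (by norm_num), ENNReal.toReal_one]
    rw [hba] at hle
    linarith

end Aux4
section Aux5

variable {Ω : Type} [MeasurableSpace Ω]

/-- The static model obtained from the sup of the arrows over `[i/n, (i+1)/n]`. -/
def hatStatic (M : Model Ω) (n i : ℕ) (p : ℝ)
    (hmarg : ∀ z : ℤ × ℤ, Even (z.1 + z.2) →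
      M.P {ω | hatXi M n i z ω = 1} = ENNReal.ofReal p) :
    StaticModel Ω p where
  P := M.P
  prob := M.prob
  ξ := fun z ω => hatXi M n i z ω
  vals := fun z ω _ => hatXi_vals M n i z ω
  meas := fun z => measurable_hatXi M n i z
  indep := by
    have h := M.indep.comp (fun _ => fD (Dset n i))
      (fun _ => measurable_fD _ (Dset_countable n i))
    have heq : (fun (z : {z : ℤ × ℤ // Even (z.1 + z.2)}) (ω : Ω) => hatXi M n i z.1 ω)
        = fun z => (fD (Dset n i)) ∘ (fun ω => fun τ : ℝ => M.ξ z.1 τ ω) := by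
      funext z ω
      show hatXi M n i z.1 ω = fD (Dset n i) (fun τ => M.ξ z.1 τ ω)
      unfold hatXi
      rw [if_pos z.2]
    rw [heq]
    exact h
  marginal := fun z hz => hmarg z hz

/-- Key per-interval probability bound via `hθ` and `hc`. -/
lemma Gset_prob_le (M : Model Ω) (A : Set (ℕ → ℤ)) (θ : ℝ → ℝ)
    (hθ : ∀ p : ℝ, p ∈ Set.Icc (0 : ℝ) 1 → ∀ (Ω' : Type) [MeasurableSpace Ω'],
      ∀ SM : StaticModel Ω' p, (SM.P {ω' | SM.walk ω' ∈ A}).toReal = θ p)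
    (c : ℝ) (hc0 : 0 ≤ c) (hc : ∀ p : ℝ, 1 / 2 ≤ p → p ≤ 1 → θ p ≤ c * (p - 1 / 2))
    (n i : ℕ) (hn : 0 < n) :
    M.P (Gset M A n i) ≤ ENNReal.ofReal (c / (4 * n)) := by
  haveI := M.prob
  have hn' : (0 : ℝ) < n := Nat.cast_pos.2 hn
  obtain ⟨p, hmarg, hphalf, hple⟩ := hat_facts M n i hn
  have hp1 : p ≤ 1 := by
    have : 0 < Real.exp (-(1 / (n : ℝ)) / 2) / 2 := by positivity
    linarith
  have hp0 : (0 : ℝ) ≤ p := by linarith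
  set SM : StaticModel Ω p := hatStatic M n i p hmarg with hSM
  have hθp := hθ p ⟨hp0, hp1⟩ Ω SM
  have hwalk : {ω | SM.walk ω ∈ A} = Gset M A n i := rfl
  rw [hwalk] at hθp
  have hSMP : SM.P = M.P := rfl
  rw [hSMP] at hθp
  -- bound θ p
  have hθb : θ p ≤ c / (4 * n) := by
    have h1 := hc p hphalf hp1
    have h2 : p - 1 / 2 ≤ 1 / (4 * n) := by
      have h := Real.add_one_le_exp (-(1 / (n : ℝ)) / 2)
      have hexp : 1 - (1 / (n : ℝ)) / 2 ≤ Real.exp (-(1 / (n : ℝ)) / 2) := by linarith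
      have e : (1 / (n : ℝ)) / 4 = 1 / (4 * n) := by rw [div_div, mul_comm]
      rw [← e]
      linarith
    calc θ p ≤ c * (p - 1 / 2) := h1
      _ ≤ c * (1 / (4 * n)) := by
          apply mul_le_mul_of_nonneg_left h2 hc0
      _ = c / (4 * n) := by ring
  have hfin : M.P (Gset M A n i) ≠ ⊤ := measure_ne_top _ _
  calc M.P (Gset M A n i) = ENNReal.ofReal (θ p) := by
        rw [← hθp, ENNReal.ofReal_toReal hfin]
    _ ≤ ENNReal.ofReal (c / (4 * n)) := ENNReal.ofReal_le_ofReal hθb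

end Aux5
section Aux6

variable {Ω : Type} [MeasurableSpace Ω]

/-- The snapped configuration at a fixed dynamical time reproduces the walk. -/
lemma walk_eq_walkOf (M : Model Ω) (ω : Ω) (τ : ℝ) (hτ : 0 ≤ τ) (k : ℕ) :
    walkOf (fun z => if Even (z.1 + z.2) then (if M.ξ z τ ω = 1 then 1 else -1) else 1) k
      = M.walk ω τ 0 0 k ∧ Even (M.walk ω τ 0 0 k + (k : ℤ)) := by
  induction k with
  | zero =>
    refine ⟨rfl, ?_⟩
    show Even ((0 : ℤ) + (0 : ℤ))
    simp
  | succ k ih =>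
    obtain ⟨ih1, ih2⟩ := ih
    set W := M.walk ω τ 0 0 k with hW
    have hWeq : M.walk ω τ 0 0 (k + 1) = W + M.ξ (W, (k : ℤ)) τ ω := by
      show M.walk ω τ 0 0 k + M.ξ (M.walk ω τ 0 0 k, 0 + (k : ℤ)) τ ω
        = W + M.ξ (W, (k : ℤ)) τ ω
      rw [zero_add]
    have hval := M.vals (W, (k : ℤ)) τ ω hτ ih2
    have harrow : (if Even ((W, (k : ℤ)).1 + (W, (k : ℤ)).2)
        then (if M.ξ (W, (k : ℤ)) τ ω = 1 then (1 : ℤ) else -1) else 1)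
        = M.ξ (W, (k : ℤ)) τ ω := by
      rw [if_pos ih2]
      rcases hval with h | h
      · rw [h, if_pos rfl]
      · rw [h]
        norm_num
    constructor
    · rw [hWeq]
      show walkOf _ k + _ = _
      rw [ih1]
      exact congrArg (fun x => W + x) harrow
    · rw [hWeq]
      rcases hval with h | h <;> rw [h] <;>
        · rw [Int.even_iff] at ih2 ⊢
          push_cast at ih2 ⊢
          omega
  
/-- Monotone coupling: an exceptional time inside interval `i` forces the sup-walk into `A`. -/
lemma coupling (M : Model Ω) (A : Set (ℕ → ℤ))
    (hInc : ∀ c c' : ℤ × ℤ → ℤ, (∀ z, c z = 1 ∨ c z = -1) → (∀ z, c' z = 1 ∨ c' z = -1) →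
      (∀ z, c z ≤ c' z) → walkOf c ∈ A → walkOf c' ∈ A)
    (n i : ℕ) (hn : 0 < n) (ω : Ω) (τ : ℝ)
    (hτIcc : τ ∈ Set.Icc ((i : ℝ) / n) (((i : ℝ) + 1) / n)) (hτ0 : 0 ≤ τ)
    (hτA : (fun k => M.walk ω τ 0 0 k) ∈ A) : ω ∈ Gset M A n i := by
  classical
  set cτ : ℤ × ℤ → ℤ :=
    fun z => if Even (z.1 + z.2) then (if M.ξ z τ ω = 1 then 1 else -1) else 1 with hcτ
  set ch : ℤ × ℤ → ℤ := fun z => hatXi M n i z ω with hch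
  have hvals : ∀ z, cτ z = 1 ∨ cτ z = -1 := by
    intro z; simp only [hcτ]; split_ifs <;> simp
  have hvals' : ∀ z, ch z = 1 ∨ ch z = -1 := fun z => hatXi_vals M n i z ω
  have hmono : ∀ z, cτ z ≤ ch z := by
    intro z
    by_cases hz : Even (z.1 + z.2)
    · simp only [hcτ, hch, if_pos hz]
      by_cases h1 : M.ξ z τ ω = 1
      · rw [if_pos h1]
        have : hatXi M n i z ω = 1 := by
          refine (hatXi_eq_one_iff M n i z hz ω).2 ?_
          obtain ⟨ε, hε, hconst⟩ := M.rightCont ω z τ hτ0 hz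
          by_cases hb : τ = ((i : ℝ) + 1) / n
          · refine ⟨τ, ⟨hτIcc, ?_⟩, h1⟩
            exact ⟨((i : ℚ) + 1) / (n : ℚ), by rw [hb]; push_cast; ring⟩
          · have hτb : τ < ((i : ℝ) + 1) / n := lt_of_le_of_ne hτIcc.2 hb
            obtain ⟨q, hq1, hq2⟩ :=
              exists_rat_btwn (lt_min hτb (by linarith : τ < τ + ε))
            refine ⟨(q : ℝ), ⟨⟨le_trans hτIcc.1 (le_of_lt hq1),
              le_of_lt (lt_of_lt_of_le hq2 (min_le_left _ _))⟩, ⟨q, rfl⟩⟩, ?_⟩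
            rw [hconst (q : ℝ) (le_of_lt hq1) (lt_of_lt_of_le hq2 (min_le_right _ _))]
            exact h1
        rw [this]
      · rw [if_neg h1]
        rcases hvals' z with h | h <;> simp only [hch] at h <;> rw [h] <;> norm_num
    · simp only [hcτ, hch]
      unfold hatXi
      rw [if_neg hz, if_neg hz]
  have hwA : walkOf cτ ∈ A := by
    have : walkOf cτ = fun k => M.walk ω τ 0 0 k :=
      funext fun k => (walk_eq_walkOf M ω τ hτ0 k).1
    rw [this]
    exact hτA
  exact hInc cτ ch hvals hvals' hmono hwA

end Aux6
section Aux7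

variable {Ω : Type} [MeasurableSpace Ω]

/-- Index of the subinterval of `[0,1]` (split into `n` pieces) containing `τ`. -/
def idx (n : ℕ) (τ : ℝ) : ℕ := min ⌊τ * n⌋₊ (n - 1)

lemma idx_spec (n : ℕ) (hn : 0 < n) (τ : ℝ) (hτ : τ ∈ Set.Icc (0 : ℝ) 1) :
    idx n τ < n ∧ τ ∈ Set.Icc ((idx n τ : ℝ) / n) (((idx n τ : ℝ) + 1) / n) := by
  have hn' : (0 : ℝ) < n := Nat.cast_pos.2 hn
  have hlt : idx n τ < n := lt_of_le_of_lt (min_le_right _ _) (by omega)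
  refine ⟨hlt, ⟨?_, ?_⟩⟩
  · rw [div_le_iff₀ hn']
    have h1 : (idx n τ : ℝ) ≤ (⌊τ * n⌋₊ : ℝ) := Nat.cast_le.2 (min_le_left _ _)
    have h2 : (⌊τ * n⌋₊ : ℝ) ≤ τ * n := Nat.floor_le (mul_nonneg hτ.1 hn'.le)
    linarith
  · rw [le_div_iff₀ hn']
    by_cases h : ⌊τ * n⌋₊ ≤ n - 1
    · have hidx : idx n τ = ⌊τ * n⌋₊ := min_eq_left h
      have := Nat.lt_floor_add_one (τ * n)
      rw [hidx]
      push_cast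
      linarith
    · have hidx : idx n τ = n - 1 := min_eq_right (by omega)
      have hc : ((n - 1 : ℕ) : ℝ) = (n : ℝ) - 1 := by
        rw [Nat.cast_sub hn]; norm_num
      rw [hidx, hc]
      have := hτ.2
      nlinarith

/-- The counting functions: number of subintervals whose sup-walk lies in `A`. -/
def gfun (M : Model Ω) (A : Set (ℕ → ℤ)) (ω : Ω) (n : ℕ) : ℝ≥0∞ :=
  ∑ i ∈ Finset.range n, (Gset M A n i).indicator (1 : Ω → ℝ≥0∞) ω

lemma measurable_gfun (M : Model Ω) (A : Set (ℕ → ℤ)) (hA : MeasurableSet A) (n : ℕ) :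
    Measurable (fun ω => gfun M A ω n) := by
  apply Finset.measurable_sum
  intro i _
  exact Measurable.indicator measurable_const (measurable_Gset M A hA n i)

/-- Pathwise: the number of exceptional times is at most the liminf of interval counts. -/
lemma pathwise_le (M : Model Ω) (A : Set (ℕ → ℤ))
    (hInc : ∀ c c' : ℤ × ℤ → ℤ, (∀ z, c z = 1 ∨ c z = -1) → (∀ z, c' z = 1 ∨ c' z = -1) →
      (∀ z, c z ≤ c' z) → walkOf c ∈ A → walkOf c' ∈ A) (ω : Ω) :
    (({τ : ℝ | τ ∈ Set.Icc (0 : ℝ) 1 ∧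
        (fun n => M.walk ω τ 0 0 n) ∈ A}.encard : ℕ∞) : ℝ≥0∞)
      ≤ Filter.liminf (fun n => gfun M A ω n) Filter.atTop := by
  classical
  set E := {τ : ℝ | τ ∈ Set.Icc (0 : ℝ) 1 ∧ (fun n => M.walk ω τ 0 0 n) ∈ A} with hE
  have key : ∀ m : ℕ, (m : ℕ∞) ≤ E.encard →
      (m : ℝ≥0∞) ≤ Filter.liminf (fun n => gfun M A ω n) Filter.atTop := by
    intro m hm
    obtain ⟨F, hFE, hFcard⟩ := Set.exists_subset_encard_eq hm
    have hFfin : F.Finite := Set.finite_of_encard_eq_coe hFcard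
    set Fs := hFfin.toFinset with hFs
    have hFscard : Fs.card = m := by
      have := hFfin.encard_eq_coe_toFinset_card
      rw [hFcard] at this
      exact_mod_cast this.symm
    have hFmem : ∀ x ∈ Fs, x ∈ E := by
      intro x hx
      exact hFE (hFfin.mem_toFinset.1 hx)
    -- main step: injective interval indices imply a count of at least m
    have H : ∀ n : ℕ, 0 < n → (∀ x ∈ Fs, ∀ y ∈ Fs, x ≠ y → idx n x ≠ idx n y) →
        (m : ℝ≥0∞) ≤ gfun M A ω n := by
      intro n hn hinj
      set T := Fs.image (idx n) with hT
      have hTcard : T.card = m := by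
        rw [hT, Finset.card_image_of_injOn, hFscard]
        intro x hx y hy hxy
        by_contra hne
        exact hinj x hx y hy hne hxy
      have hTsub : T ⊆ Finset.range n := by
        intro j hj
        obtain ⟨x, hx, rfl⟩ := Finset.mem_image.1 hj
        exact Finset.mem_range.2 (idx_spec n hn x (hFmem x hx).1).1
      have hind : ∀ j ∈ T, (Gset M A n j).indicator (1 : Ω → ℝ≥0∞) ω = 1 := by
        intro j hj
        obtain ⟨x, hx, rfl⟩ := Finset.mem_image.1 hj
        obtain ⟨hxIcc, hxA⟩ := hFmem x hx
        have hmem : ω ∈ Gset M A n (idx n x) :=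
          coupling M A hInc n (idx n x) hn ω x (idx_spec n hn x hxIcc).2 hxIcc.1 hxA
        rw [Set.indicator_of_mem hmem]
        rfl
      calc (m : ℝ≥0∞) = ∑ _j ∈ T, (1 : ℝ≥0∞) := by
            rw [Finset.sum_const, hTcard, nsmul_eq_mul, mul_one]
        _ = ∑ j ∈ T, (Gset M A n j).indicator (1 : Ω → ℝ≥0∞) ω :=
            (Finset.sum_congr rfl hind).symm
        _ ≤ ∑ j ∈ Finset.range n, (Gset M A n j).indicator (1 : Ω → ℝ≥0∞) ω :=
            Finset.sum_le_sum_of_subset hTsub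
        _ = gfun M A ω n := rfl
    -- choose N such that distinct points fall in distinct intervals
    have hNex : ∃ N : ℕ, 1 ≤ N ∧ ∀ n : ℕ, N ≤ n →
        (∀ x ∈ Fs, ∀ y ∈ Fs, x ≠ y → idx n x ≠ idx n y) := by
      rcases Finset.eq_empty_or_nonempty Fs.offDiag with hP | hP
      · refine ⟨1, le_refl _, fun n _ x hx y hy hxy _ => ?_⟩
        have : (x, y) ∈ Fs.offDiag := Finset.mem_offDiag.2 ⟨hx, hy, hxy⟩
        rw [hP] at this
        exact absurd this (Finset.notMem_empty _)
      · set Q := Fs.offDiag.image (fun p => |p.1 - p.2|) with hQ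
        have hQne : Q.Nonempty := hP.image _
        set δ := Q.min' hQne with hδ
        have hδpos : 0 < δ := by
          have hmem := Q.min'_mem hQne
          obtain ⟨p, hp, hpe⟩ := Finset.mem_image.1 hmem
          obtain ⟨_, _, hne⟩ := Finset.mem_offDiag.1 hp
          have h0 : 0 < |p.1 - p.2| := abs_pos.2 (sub_ne_zero.2 hne)
          rw [hpe] at h0
          exact h0
        refine ⟨⌈1 / δ⌉₊ + 1, by omega, fun n hN x hx y hy hxy heq => ?_⟩
        have hn : 0 < n := by omega
        have hn' : (0 : ℝ) < n := Nat.cast_pos.2 hn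
        have hδle : δ ≤ |x - y| :=
          Finset.min'_le _ _
            (Finset.mem_image.2 ⟨(x, y), Finset.mem_offDiag.2 ⟨hx, hy, hxy⟩, rfl⟩)
        have hxI := (idx_spec n hn x (hFmem x hx).1).2
        have hyI := (idx_spec n hn y (hFmem y hy).1).2
        rw [heq] at hxI
        have hclose : |x - y| ≤ 1 / n := by
          rw [abs_le]
          have e : ((idx n y : ℝ) + 1) / n - (idx n y : ℝ) / n = 1 / n := by
            field_simp; ring
          constructor <;> [linarith [hxI.1, hxI.2, hyI.1, hyI.2]; 
            linarith [hxI.1, hxI.2, hyI.1, hyI.2]]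
        have hninv : 1 / (n : ℝ) < δ := by
          have h1 : (1 : ℝ) / δ ≤ (⌈1 / δ⌉₊ : ℝ) := Nat.le_ceil _
          have h2 : ((⌈1 / δ⌉₊ : ℕ) : ℝ) + 1 ≤ (n : ℝ) := by
            exact_mod_cast Nat.cast_le.2 hN
          rw [div_lt_iff₀ hn']
          rw [div_le_iff₀ hδpos] at h1
          nlinarith
        linarith
    obtain ⟨N, hN1, hNprop⟩ := hNex
    have hev : ∀ᶠ n in Filter.atTop, (m : ℝ≥0∞) ≤ gfun M A ω n := by
      rw [Filter.eventually_atTop]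
      exact ⟨N, fun n hn => H n (by omega) (hNprop n hn)⟩
    exact Filter.le_liminf_of_le (by isBoundedDefault) hev
  rcases eq_or_ne E.encard ⊤ with htop | hfin
  · rw [htop]
    have : Filter.liminf (fun n => gfun M A ω n) Filter.atTop = ⊤ := by
      rw [← top_le_iff, ← ENNReal.iSup_natCast]
      exact iSup_le fun m => key m (by rw [htop]; exact le_top)
    rw [this]
    simp
  · obtain ⟨m, hm⟩ := WithTop.ne_top_iff_exists.1 hfin
    have := key m (le_of_eq hm)
    rw [← hm]
    exact_mod_cast this

end Aux7
/-- **Tameness criterion.** If `{S₀ ∈ A}` is an increasing event of the arrow variables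
with `P_{1/2}(S₀ ∈ A) = 0` and `θ_A(p) = P_p(S₀ ∈ A) ≤ c(p − 1/2)` for `p ≥ 1/2`, then
the expected number of dynamical times `τ ∈ [0,1]` with `S₀^τ ∈ A` is finite. -/
theorem exceptional_times_thm1 (M : Model Ω)
    (A : Set (ℕ → ℤ)) (hA : MeasurableSet A)
    (hInc : ∀ c c' : ℤ × ℤ → ℤ, (∀ z, c z = 1 ∨ c z = -1) → (∀ z, c' z = 1 ∨ c' z = -1) →
      (∀ z, c z ≤ c' z) → walkOf c ∈ A → walkOf c' ∈ A)
    (θ : ℝ → ℝ)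
    (hθ : ∀ p : ℝ, p ∈ Set.Icc (0 : ℝ) 1 → ∀ (Ω' : Type) [MeasurableSpace Ω'],
      ∀ SM : StaticModel Ω' p, (SM.P {ω' | SM.walk ω' ∈ A}).toReal = θ p)
    (hzero : θ (1 / 2) = 0)
    (c : ℝ) (hc : ∀ p : ℝ, 1 / 2 ≤ p → p ≤ 1 → θ p ≤ c * (p - 1 / 2)) :
    ∫⁻ ω, (({τ : ℝ | τ ∈ Set.Icc (0 : ℝ) 1 ∧
        (fun n => M.walk ω τ 0 0 n) ∈ A}.encard : ℕ∞) : ℝ≥0∞) ∂M.P < ⊤ := by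
  classical
  haveI := M.prob
  set c' := max c 0 with hc'def
  have hc'0 : 0 ≤ c' := le_max_right _ _
  have hc' : ∀ p : ℝ, 1 / 2 ≤ p → p ≤ 1 → θ p ≤ c' * (p - 1 / 2) := by
    intro p h1 h2
    exact le_trans (hc p h1 h2)
      (mul_le_mul_of_nonneg_right (le_max_left _ _) (by linarith))
  have hint : ∀ n : ℕ, 0 < n →
      ∫⁻ ω, gfun M A ω n ∂M.P ≤ ENNReal.ofReal (c' / 4) := by
    intro n hn
    have hn' : (0 : ℝ) < n := Nat.cast_pos.2 hn
    have h1 : ∫⁻ ω, gfun M A ω n ∂M.P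
        = ∑ i ∈ Finset.range n, M.P (Gset M A n i) := by
      unfold gfun
      rw [lintegral_finset_sum (f := fun i => (Gset M A n i).indicator (1 : Ω → ℝ≥0∞))
        (Finset.range n) (fun i _ =>
        Measurable.indicator measurable_const (measurable_Gset M A hA n i))]
      exact Finset.sum_congr rfl fun i _ =>
        lintegral_indicator_one (measurable_Gset M A hA n i)
    rw [h1]
    calc ∑ i ∈ Finset.range n, M.P (Gset M A n i)
        ≤ ∑ _i ∈ Finset.range n, ENNReal.ofReal (c' / (4 * n)) :=
          Finset.sum_le_sum fun i _ => Gset_prob_le M A θ hθ c' hc'0 hc' n i hn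
      _ = (n : ℝ≥0∞) * ENNReal.ofReal (c' / (4 * n)) := by
          rw [Finset.sum_const, Finset.card_range, nsmul_eq_mul]
      _ = ENNReal.ofReal ((n : ℝ) * (c' / (4 * n))) := by
          rw [ENNReal.ofReal_mul (by positivity : (0:ℝ) ≤ (n:ℝ)), ENNReal.ofReal_natCast]
      _ = ENNReal.ofReal (c' / 4) := by
          congr 1
          field_simp
  calc ∫⁻ ω, (({τ : ℝ | τ ∈ Set.Icc (0 : ℝ) 1 ∧
        (fun n => M.walk ω τ 0 0 n) ∈ A}.encard : ℕ∞) : ℝ≥0∞) ∂M.P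
      ≤ ∫⁻ ω, Filter.liminf (fun n => gfun M A ω n) Filter.atTop ∂M.P :=
        lintegral_mono fun ω => pathwise_le M A hInc ω
    _ ≤ Filter.liminf (fun n => ∫⁻ ω, gfun M A ω n ∂M.P) Filter.atTop :=
        lintegral_liminf_le fun n => measurable_gfun M A hA n
    _ ≤ ENNReal.ofReal (c' / 4) := by
        apply Filter.liminf_le_of_frequently_le'
        exact ((Filter.eventually_ge_atTop 1).mono fun n hn => hint n hn).frequently
    _ < ⊤ := ENNReal.ofReal_lt_top


end DyDWPaper
end
end

section
/- Let O = {π ∈ C([0,1]) : π(t) > −1 for all t∈[0,1] and π(1) > 1} and, for r ≥ 0, let O+r = {π ∈ C([0,1]) : ∃ π̄ ∈ O with |π − π̄|_∞ ≤ r}. For any α < 1/2 there exists c' ∈ (0,∞), independent of Δ and δ, such that for all δ ∈ (0,1] and all Δ ≥ δ, P(S̃ ∈ (O+Δ^α) \ O) ≤ c'·Δ^α, where S is a simple symmetric random walk. -/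
open MeasureTheory ProbabilityTheory Filter Set
open scoped ENNReal NNReal

noncomputable section

namespace DyDWPaper

variable {Ω Ω' : Type} [MeasurableSpace Ω] [MeasurableSpace Ω']

variable {Ω : Type} [MeasurableSpace Ω]

-- === aux ===


def sgn (b : Bool) : ℤ := if b then 1 else -1

lemma sgn_not (b : Bool) : sgn (!b) = -sgn b := by cases b <;> simp [sgn]

lemma sgn_abs (b : Bool) : sgn b = 1 ∨ sgn b = -1 := by cases b <;> simp [sgn]

def pse {m : ℕ} (e : Fin m → Bool) (k : ℕ) : ℤ :=
  ∑ i : Fin m, if (i : ℕ) < k then sgn (e i) else 0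

lemma pse_zero {m : ℕ} (e : Fin m → Bool) : pse e 0 = 0 := by simp [pse]

lemma pse_succ {m : ℕ} (e : Fin m → Bool) {k : ℕ} (h : k < m) :
    pse e (k + 1) = pse e k + sgn (e ⟨k, h⟩) := by
  unfold pse
  have hterm : ∀ i : Fin m, (if (i : ℕ) < k + 1 then sgn (e i) else 0)
      = (if (i : ℕ) < k then sgn (e i) else 0) + (if (i : ℕ) = k then sgn (e i) else 0) := by
    intro i
    rcases lt_trichotomy (i : ℕ) k with h1 | h1 | h1
    · simp [h1, Nat.lt_succ_of_lt h1, Nat.ne_of_lt h1]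
    · simp [h1]
    · have h2 : ¬ ((i:ℕ) < k + 1) := by omega
      simp [h2, Nat.lt_asymm h1, (Nat.ne_of_lt h1).symm]
  rw [Finset.sum_congr rfl (fun i _ => hterm i), Finset.sum_add_distrib]
  congr 1
  rw [Finset.sum_eq_single (⟨k, h⟩ : Fin m)]
  · simp
  · intro i _ hne
    have : (i : ℕ) ≠ k := fun hh => hne (Fin.ext hh)
    simp [this]
  · simp

lemma pse_stable {m : ℕ} (e : Fin m → Bool) {k : ℕ} (h : m ≤ k) :
    pse e k = pse e m := by
  unfold pse
  refine Finset.sum_congr rfl fun i _ => ?_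
  have h1 : (i : ℕ) < k := lt_of_lt_of_le i.2 h
  simp [h1, i.2]

lemma pse_succ_ge {m : ℕ} (e : Fin m → Bool) (k : ℕ) :
    pse e k - 1 ≤ pse e (k + 1) := by
  rcases lt_or_ge k m with h | h
  · rw [pse_succ e h]
    rcases sgn_abs (e ⟨k, h⟩) with h1 | h1 <;> omega
  · rw [pse_stable e h, pse_stable e (le_trans h (Nat.le_succ k))]; omega

lemma count_sum_eq_le (m : ℕ) (v : ℤ) :
    (Finset.univ.filter fun e : Fin m → Bool => pse e m = v).card ≤ m.choose (m / 2) := by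
  classical
  set k : ℕ := ((v + m) / 2).toNat with hk
  have hsum : ∀ e : Fin m → Bool,
      pse e m = 2 * ((Finset.univ.filter fun i => e i = true).card : ℤ) - m := by
    intro e
    have hp : pse e m = ∑ i : Fin m, sgn (e i) := by
      unfold pse; exact Finset.sum_congr rfl fun i _ => by simp [i.2]
    rw [hp, ← Finset.sum_filter_add_sum_filter_not Finset.univ (fun i => e i = true)]
    have h1 : ∑ i ∈ Finset.univ.filter (fun i => e i = true), sgn (e i)
        = ∑ _i ∈ Finset.univ.filter (fun i : Fin m => e i = true), (1 : ℤ) :=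
      Finset.sum_congr rfl fun i hi => by simp [sgn, (Finset.mem_filter.1 hi).2]
    have h2 : ∑ i ∈ Finset.univ.filter (fun i => ¬ e i = true), sgn (e i)
        = ∑ _i ∈ Finset.univ.filter (fun i : Fin m => ¬ e i = true), (-1 : ℤ) := by
      refine Finset.sum_congr rfl fun i hi => ?_
      have := (Finset.mem_filter.1 hi).2
      simp only [Bool.not_eq_true] at this
      simp [sgn, this]
    rw [h1, h2, Finset.sum_const, Finset.sum_const]
    have h3 := Finset.card_filter_add_card_filter_not (s := Finset.univ)
      (p := fun i : Fin m => e i = true)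
    simp only [Finset.card_univ, Fintype.card_fin] at h3
    push_cast [← h3]
    ring
  calc (Finset.univ.filter fun e : Fin m → Bool => pse e m = v).card
      ≤ (Finset.univ.powersetCard k).card := by
        refine Finset.card_le_card_of_injOn
          (fun e => Finset.univ.filter fun i => e i = true) ?_ ?_
        · intro e he
          have he' := (Finset.mem_filter.1 he).2
          have hse := hsum e
          rw [he'] at hse
          simp only [Finset.mem_coe, Finset.mem_powersetCard]
          exact ⟨Finset.subset_univ _, by omega⟩
        · intro e1 _ e2 _ hee
          dsimp only at hee
          funext i
          have := Finset.ext_iff.1 hee i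
          simp only [Finset.mem_filter, Finset.mem_univ, true_and] at this
          cases h1' : e1 i <;> cases h2' : e2 i <;> simp_all
    _ = m.choose k := by rw [Finset.card_powersetCard]; simp
    _ ≤ m.choose (m / 2) := Nat.choose_le_middle k m

lemma cb_sq (m : ℕ) : (Nat.centralBinom m) ^ 2 * (2 * m + 1) ≤ 16 ^ m := by
  induction m with
  | zero => simp [Nat.centralBinom]
  | succ m ih =>
    have key := Nat.succ_mul_centralBinom_succ m
    have hpos : 0 < (m + 1) ^ 2 := by positivity
    refine Nat.le_of_mul_le_mul_left ?_ hpos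
    calc (m + 1) ^ 2 * ((Nat.centralBinom (m + 1)) ^ 2 * (2 * (m + 1) + 1))
        = ((m + 1) * Nat.centralBinom (m + 1)) ^ 2 * (2 * m + 3) := by ring
      _ = (2 * (2 * m + 1) * Nat.centralBinom m) ^ 2 * (2 * m + 3) := by rw [key]
      _ = (Nat.centralBinom m ^ 2 * (2 * m + 1)) * (4 * (2 * m + 1) * (2 * m + 3)) := by ring
      _ ≤ 16 ^ m * (4 * (2 * m + 1) * (2 * m + 3)) := Nat.mul_le_mul_right _ ih
      _ ≤ 16 ^ m * (4 * ((2 * m + 2) * (2 * m + 2))) := by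
          refine Nat.mul_le_mul_left _ ?_
          nlinarith
      _ = (m + 1) ^ 2 * 16 ^ (m + 1) := by ring

lemma cb_real (a : ℕ) : (Nat.centralBinom a : ℝ) ≤ 4 ^ a / Real.sqrt (2 * a + 1) := by
  have h := cb_sq a
  have hpos : (0 : ℝ) < 2 * (a : ℝ) + 1 := by positivity
  have hs : Real.sqrt (2 * (a : ℝ) + 1) > 0 := Real.sqrt_pos.2 hpos
  have h16 : (16 : ℝ) ^ a = ((4 : ℝ) ^ a) ^ 2 := by
    rw [← pow_mul, mul_comm, pow_mul]; norm_num
  have h' : ((Nat.centralBinom a : ℝ)) ^ 2 ≤ (4 ^ a / Real.sqrt (2 * a + 1)) ^ 2 := by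
    have hc : ((Nat.centralBinom a : ℝ)) ^ 2 * (2 * a + 1) ≤ (4 ^ a) ^ 2 := by
      have := (Nat.cast_le (α := ℝ)).2 h
      push_cast at this
      rw [← h16]; exact this
    rw [div_pow, Real.sq_sqrt hpos.le, le_div_iff₀ hpos]
    exact hc
  calc (Nat.centralBinom a : ℝ) = Real.sqrt (((Nat.centralBinom a : ℝ)) ^ 2) :=
        (Real.sqrt_sq (Nat.cast_nonneg _)).symm
    _ ≤ Real.sqrt ((4 ^ a / Real.sqrt (2 * a + 1)) ^ 2) := Real.sqrt_le_sqrt h'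
    _ = 4 ^ a / Real.sqrt (2 * a + 1) := Real.sqrt_sq (by positivity)

lemma middle_le (m : ℕ) (hm : 1 ≤ m) :
    (m.choose (m / 2) : ℝ) ≤ 2 ^ m / Real.sqrt m := by
  have h4 : ∀ a : ℕ, (4 : ℝ) ^ a = 2 ^ (2 * a) := by
    intro a; rw [pow_mul]; norm_num
  rcases Nat.even_or_odd m with ⟨a, ha⟩ | ⟨a, ha⟩
  · subst ha
    have ha1 : 1 ≤ a := by omega
    have h1 : (a + a) / 2 = a := by omega
    have h2 : (a + a).choose a = Nat.centralBinom a := by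
      rw [Nat.centralBinom]; congr 1; omega
    rw [h1, h2]
    calc (Nat.centralBinom a : ℝ) ≤ 4 ^ a / Real.sqrt (2 * a + 1) := cb_real a
      _ ≤ 4 ^ a / Real.sqrt ((a + a : ℕ)) := by
          apply div_le_div_of_nonneg_left (by positivity)
            (Real.sqrt_pos.2 (by push_cast; positivity))
          apply Real.sqrt_le_sqrt; push_cast; linarith
      _ = 2 ^ (a + a) / Real.sqrt ((a + a : ℕ)) := by
          rw [h4 a, two_mul]
  · obtain ⟨b, rfl⟩ : ∃ b, m = 2 * b + 1 := ⟨a, ha⟩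
    have h1 : (2 * b + 1) / 2 = b := by omega
    rw [h1]
    have h22 : 2 * (b + 1) = 2 * b + 2 := by ring
    have hcb : Nat.centralBinom (b + 1) = (2 * b + 2).choose (b + 1) := by
      rw [Nat.centralBinom, h22]
    have hch : (2 * b + 1).choose b ≤ 2 * Nat.centralBinom b := by
      rcases Nat.eq_zero_or_pos b with rfl | hb0
      · simp [Nat.centralBinom]
      · obtain ⟨c, rfl⟩ : ∃ c, b = c + 1 := ⟨b - 1, by omega⟩
        have h22 : 2 * (c + 1) = 2 * c + 2 := by ring
        have hcb' : Nat.centralBinom (c + 1) = (2 * c + 2).choose (c + 1) := by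
          rw [Nat.centralBinom, h22]
        have hx : 2 * (c + 1) + 1 = (2 * c + 2) + 1 := by ring
        rw [hx, Nat.choose_succ_succ, hcb']
        simp only [Nat.succ_eq_add_one]
        have c1 : (2 * c + 2).choose c ≤ (2 * c + 2).choose ((2 * c + 2) / 2) :=
          Nat.choose_le_middle c (2 * c + 2)
        have hd : (2 * c + 2) / 2 = c + 1 := by omega
        rw [hd] at c1
        omega
    calc ((2 * b + 1).choose b : ℝ) ≤ 2 * (Nat.centralBinom b : ℝ) := by exact_mod_cast hch
      _ ≤ 2 * (4 ^ b / Real.sqrt (2 * b + 1)) := by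
          have := cb_real b; linarith
      _ = 2 ^ (2 * b + 1) / Real.sqrt (2 * b + 1) := by
          rw [h4 b]; ring
      _ = 2 ^ (2 * b + 1) / Real.sqrt ((2 * b + 1 : ℕ)) := by push_cast; ring_nf


section Reflection

open scoped Classical

variable {m : ℕ} {j : ℤ}

noncomputable def hitT (j : ℤ) {m : ℕ} (e : Fin m → Bool) : ℕ := sInf {k | pse e k ≤ -j}

noncomputable def reflE (j : ℤ) {m : ℕ} (e : Fin m → Bool) : Fin m → Bool :=
  fun i => if (i : ℕ) < hitT j e then e i else !(e i)

lemma hitT_mem (e : Fin m → Bool) (h : ∃ k, pse e k ≤ -j) :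
    pse e (hitT j e) ≤ -j := Nat.sInf_mem h

lemma hitT_min (e : Fin m → Bool) {k : ℕ} (hk : k < hitT j e) : -j < pse e k := by
  by_contra hc
  push_neg at hc
  exact absurd (Nat.sInf_le hc) (Nat.not_le.2 hk)

lemma hitT_eq (hj : 1 ≤ j) (e : Fin m → Bool) (h : ∃ k, pse e k ≤ -j) :
    pse e (hitT j e) = -j := by
  have hmem := hitT_mem e h
  rcases Nat.eq_zero_or_pos (hitT j e) with h0 | hpos
  · rw [h0, pse_zero] at hmem ⊢; omega
  · obtain ⟨t, ht⟩ : ∃ t, hitT j e = t + 1 := ⟨hitT j e - 1, by omega⟩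
    have hlt : -j < pse e t := hitT_min e (by omega)
    have hstep := pse_succ_ge e t
    rw [ht] at hmem ⊢
    omega

lemma pse_reflE_le (e : Fin m → Bool) {k : ℕ} (hk : k ≤ hitT j e) :
    pse (reflE j e) k = pse e k := by
  unfold pse
  refine Finset.sum_congr rfl fun i _ => ?_
  by_cases h1 : (i : ℕ) < k
  · have : (i : ℕ) < hitT j e := lt_of_lt_of_le h1 hk
    simp [reflE, h1, this]
  · simp [h1]

lemma pse_reflE_ge (hj : 1 ≤ j) (e : Fin m → Bool) (h : ∃ k, pse e k ≤ -j)
    {k : ℕ} (hk : hitT j e ≤ k) :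
    pse (reflE j e) k = -2 * j - pse e k := by
  have key : pse (reflE j e) k + pse e k = 2 * pse e (hitT j e) := by
    unfold pse
    rw [← Finset.sum_add_distrib, Finset.mul_sum]
    refine Finset.sum_congr rfl fun i _ => ?_
    by_cases h1 : (i : ℕ) < hitT j e
    · have h2 : (i : ℕ) < k := lt_of_lt_of_le h1 hk
      simp [reflE, h1, h2]; ring
    · by_cases h2 : (i : ℕ) < k
      · simp [reflE, h1, h2, sgn_not]
      · simp [reflE, h1, h2]
  have := hitT_eq hj e h
  omega

lemma exists_reflE (hj : 1 ≤ j) (e : Fin m → Bool) (h : ∃ k, pse e k ≤ -j) :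
    ∃ k, pse (reflE j e) k ≤ -j :=
  ⟨hitT j e, by rw [pse_reflE_le e le_rfl, hitT_eq hj e h]⟩

lemma hitT_reflE (hj : 1 ≤ j) (e : Fin m → Bool) (h : ∃ k, pse e k ≤ -j) :
    hitT j (reflE j e) = hitT j e := by
  apply le_antisymm
  · apply Nat.sInf_le
    show pse (reflE j e) (hitT j e) ≤ -j
    rw [pse_reflE_le e le_rfl, hitT_eq hj e h]
  · by_contra hc
    push_neg at hc
    have hmem : pse (reflE j e) (hitT j (reflE j e)) ≤ -j :=
      hitT_mem _ (exists_reflE hj e h)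
    rw [pse_reflE_le e hc.le] at hmem
    exact absurd hmem (not_le.2 (hitT_min e hc))

lemma reflE_reflE (hj : 1 ≤ j) (e : Fin m → Bool) (h : ∃ k, pse e k ≤ -j) :
    reflE j (reflE j e) = e := by
  funext i
  have hT := hitT_reflE hj e h
  by_cases h1 : (i : ℕ) < hitT j e
  · simp [reflE, hT, h1]
  · simp [reflE, hT, h1]

lemma refl_card (hj : 1 ≤ j) (m : ℕ) :
    (Finset.univ.filter fun e : Fin m → Bool => ∃ k, pse e k ≤ -j).card
      = (Finset.univ.filter fun e : Fin m → Bool => pse e m ≤ -j).card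
        + (Finset.univ.filter fun e : Fin m → Bool => pse e m ≤ -j - 1).card := by
  have hT_le_m : ∀ e : Fin m → Bool, (∃ k, pse e k ≤ -j) → hitT j e ≤ m := by
    intro e he
    obtain ⟨k, hk⟩ := he
    rcases le_or_gt k m with h | h
    · exact le_trans (Nat.sInf_le hk) h
    · refine Nat.sInf_le ?_
      show pse e m ≤ -j
      rw [← pse_stable e h.le]; exact hk
  rw [← Finset.card_filter_add_card_filter_not
    (p := fun e : Fin m → Bool => pse e m ≤ -j)
    (s := Finset.univ.filter fun e : Fin m → Bool => ∃ k, pse e k ≤ -j)]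
  congr 1
  · refine congrArg Finset.card ?_
    rw [Finset.filter_filter]
    apply Finset.filter_congr
    intro e _
    simp only [and_iff_right_iff_imp]
    exact fun hm => ⟨m, hm⟩
  · rw [Finset.filter_filter]
    refine Finset.card_bij' (fun e _ => reflE j e) (fun f _ => reflE j f) ?_ ?_ ?_ ?_
    · intro e he
      rw [Finset.mem_filter] at he
      obtain ⟨_, hH, hgt⟩ := he
      push_neg at hgt
      rw [Finset.mem_filter]
      refine ⟨Finset.mem_univ _, ?_⟩
      rw [pse_reflE_ge hj e hH (hT_le_m e hH)]
      omega
    · intro f hf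
      rw [Finset.mem_filter] at hf
      obtain ⟨_, hf⟩ := hf
      have hHf : ∃ k, pse f k ≤ -j := ⟨m, by omega⟩
      rw [Finset.mem_filter]
      refine ⟨Finset.mem_univ _, exists_reflE hj f hHf, ?_⟩
      push_neg
      rw [pse_reflE_ge hj f hHf (hT_le_m f hHf)]
      omega
    · intro e he
      rw [Finset.mem_filter] at he
      exact reflE_reflE hj e he.2.1
    · intro f hf
      rw [Finset.mem_filter] at hf
      exact reflE_reflE hj f ⟨m, by omega⟩

lemma count_Ioc (m : ℕ) (a b : ℤ) :
    (Finset.univ.filter fun e : Fin m → Bool => pse e m ∈ Set.Ioc a b).card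
      ≤ (b - a).toNat * m.choose (m / 2) := by
  rw [Finset.card_eq_sum_card_fiberwise
    (f := fun e : Fin m → Bool => pse e m) (t := Finset.Ioc a b)
    (fun e he => by
      rw [Finset.mem_coe, Finset.mem_Ioc]
      exact (Finset.mem_filter.1 (Finset.mem_coe.1 he)).2)]
  calc ∑ v ∈ Finset.Ioc a b,
        ((Finset.univ.filter fun e : Fin m → Bool => pse e m ∈ Set.Ioc a b).filter
          fun e => pse e m = v).card
      ≤ ∑ _v ∈ Finset.Ioc a b, m.choose (m / 2) := by
        refine Finset.sum_le_sum fun v _ => ?_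
        refine le_trans (Finset.card_le_card ?_) (count_sum_eq_le m v)
        intro e he
        rw [Finset.mem_filter] at he ⊢
        exact ⟨Finset.mem_univ _, he.2⟩
    _ = (b - a).toNat * m.choose (m / 2) := by
        rw [Finset.sum_const, Int.card_Ioc]; simp [mul_comm]

lemma filter_le_split (m : ℕ) (c₁ c₂ : ℤ) (h12 : c₁ ≤ c₂) :
    (Finset.univ.filter fun e : Fin m → Bool => pse e m ≤ -c₁).card
      = (Finset.univ.filter fun e : Fin m → Bool => pse e m ≤ -c₂).card
        + (Finset.univ.filter fun e : Fin m → Bool => pse e m ∈ Set.Ioc (-c₂) (-c₁)).card := by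
  rw [← Finset.card_filter_add_card_filter_not
    (p := fun e : Fin m → Bool => pse e m ≤ -c₂)
    (s := Finset.univ.filter fun e : Fin m → Bool => pse e m ≤ -c₁)]
  congr 1
  · refine congrArg Finset.card ?_
    rw [Finset.filter_filter]
    apply Finset.filter_congr
    intro e _
    constructor
    · exact fun h => h.2
    · exact fun h => ⟨by omega, h⟩
  · refine congrArg Finset.card ?_
    rw [Finset.filter_filter]
    apply Finset.filter_congr
    intro e _
    simp only [Set.mem_Ioc]
    constructor
    · intro h; obtain ⟨h1, h2⟩ := h; omega
    · intro h; obtain ⟨h1, h2⟩ := h; omega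

lemma windowB (m : ℕ) (c₁ c₂ : ℤ) (h1 : 1 ≤ c₁) (h12 : c₁ ≤ c₂) :
    (Finset.univ.filter fun e : Fin m → Bool =>
        (∃ k, pse e k ≤ -c₁) ∧ ∀ k, -c₂ < pse e k).card
      ≤ 2 * ((c₂ - c₁).toNat * m.choose (m / 2)) := by
  have hsub : (Finset.univ.filter fun e : Fin m → Bool =>
        (∃ k, pse e k ≤ -c₁) ∧ ∀ k, -c₂ < pse e k)
      ∪ (Finset.univ.filter fun e : Fin m → Bool => ∃ k, pse e k ≤ -c₂)
      ⊆ Finset.univ.filter fun e : Fin m → Bool => ∃ k, pse e k ≤ -c₁ := by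
    intro e he
    rw [Finset.mem_union] at he
    rw [Finset.mem_filter]
    refine ⟨Finset.mem_univ _, ?_⟩
    rcases he with he | he
    · exact ((Finset.mem_filter.1 he).2).1
    · obtain ⟨k, hk⟩ := (Finset.mem_filter.1 he).2
      exact ⟨k, by omega⟩
  have hdisj : Disjoint
      (Finset.univ.filter fun e : Fin m → Bool =>
        (∃ k, pse e k ≤ -c₁) ∧ ∀ k, -c₂ < pse e k)
      (Finset.univ.filter fun e : Fin m → Bool => ∃ k, pse e k ≤ -c₂) := by
    rw [Finset.disjoint_left]
    intro e he1 he2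
    obtain ⟨_, hlt⟩ := (Finset.mem_filter.1 he1).2
    obtain ⟨k, hk⟩ := (Finset.mem_filter.1 he2).2
    exact absurd (hlt k) (by omega)
  have hcard := le_trans
    (le_of_eq (Finset.card_union_of_disjoint hdisj).symm)
    (Finset.card_le_card hsub)
  have e1 := refl_card (j := c₁) h1 m
  have e2 := refl_card (j := c₂) (le_trans h1 h12) m
  have w1 := filter_le_split m c₁ c₂ h12
  have w2 := filter_le_split m (c₁ + 1) (c₂ + 1) (by omega)
  have hb1 := count_Ioc m (-c₂) (-c₁)
  have hb2 := count_Ioc m (-(c₂ + 1)) (-(c₁ + 1))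
  have hd1 : (-c₁ - -c₂).toNat = (c₂ - c₁).toNat := by omega
  have hd2 : (-(c₁ + 1) - -(c₂ + 1)).toNat = (c₂ - c₁).toNat := by omega
  rw [hd1] at hb1
  rw [hd2] at hb2
  have hc1 : (Finset.univ.filter fun e : Fin m → Bool => pse e m ≤ -c₁ - 1)
      = Finset.univ.filter fun e : Fin m → Bool => pse e m ≤ -(c₁ + 1) := by
    apply Finset.filter_congr; intro e _; constructor <;> intro h <;> omega
  have hc2 : (Finset.univ.filter fun e : Fin m → Bool => pse e m ≤ -c₂ - 1)
      = Finset.univ.filter fun e : Fin m → Bool => pse e m ≤ -(c₂ + 1) := by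
    apply Finset.filter_congr; intro e _; constructor <;> intro h <;> omega
  rw [hc1] at e1
  rw [hc2] at e2
  omega

end Reflection

section Bridge

open MeasureTheory ProbabilityTheory
open scoped ENNReal Classical

variable {Ω : Type} [MeasurableSpace Ω]

lemma RW_half (R : RW Ω) (i : ℕ) (c : ℤ) (hc : c = 1 ∨ c = -1) :
    R.P {ω | R.X i ω = c} = (2 : ℝ≥0∞)⁻¹ := by
  haveI := R.prob
  rcases hc with rfl | rfl
  · rw [R.fair i, one_div]
  · have hset : {ω | R.X i ω = -1} = {ω | R.X i ω = 1}ᶜ := by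
      ext ω
      simp only [Set.mem_compl_iff, Set.mem_setOf_eq]
      constructor
      · intro h h1; rw [h1] at h; norm_num at h
      · intro h; rcases R.vals i ω with h1 | h1
        · exact absurd h1 h
        · exact h1
    have hms : MeasurableSet {ω | R.X i ω = 1} := R.meas i (measurableSet_singleton 1)
    rw [hset, measure_compl hms (measure_ne_top _ _), measure_univ, R.fair i, one_div,
      ENNReal.one_sub_inv_two]

lemma cylinder_meas (R : RW Ω) (m : ℕ) (e : Fin m → Bool) :
    R.P {ω | ∀ i : Fin m, R.X (i : ℕ) ω = sgn (e i)} = (2 ^ m : ℝ≥0∞)⁻¹ := by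
  have hev : {ω | ∀ i : Fin m, R.X (i : ℕ) ω = sgn (e i)}
      = ⋂ i ∈ Finset.range m, R.X i ⁻¹'
          (if h : i < m then {sgn (e ⟨i, h⟩)} else Set.univ) := by
    ext ω
    simp only [Set.mem_setOf_eq, Set.mem_iInter, Finset.mem_range, Set.mem_preimage]
    constructor
    · intro h i hi
      simp only [hi, dif_pos]
      exact h ⟨i, hi⟩
    · intro h i
      have := h (i : ℕ) i.2
      simpa only [i.2, dif_pos, Set.mem_singleton_iff] using this
  have hmeas : ∀ i, i ∈ Finset.range m →
      MeasurableSet (if h : i < m then ({sgn (e ⟨i, h⟩)} : Set ℤ) else Set.univ) := by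
    intro i _
    by_cases h : i < m <;> simp [h]
  rw [hev, R.indep.measure_inter_preimage_eq_mul (Finset.range m) hmeas]
  have hfac : ∀ i ∈ Finset.range m,
      R.P (R.X i ⁻¹' (if h : i < m then ({sgn (e ⟨i, h⟩)} : Set ℤ) else Set.univ))
        = (2 : ℝ≥0∞)⁻¹ := by
    intro i hi
    rw [Finset.mem_range] at hi
    rw [dif_pos hi]
    have : R.X i ⁻¹' {sgn (e ⟨i, hi⟩)} = {ω | R.X i ω = sgn (e ⟨i, hi⟩)} := rfl
    rw [this]
    exact RW_half R i _ (sgn_abs _)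
  rw [Finset.prod_congr rfl hfac, Finset.prod_const, Finset.card_range, ← ENNReal.inv_pow]

lemma prob_le_count (R : RW Ω) (m : ℕ) (A : Set Ω) (Q : (Fin m → Bool) → Prop)
    [DecidablePred Q]
    (hA : ∀ ω ∈ A, ∀ e : Fin m → Bool, (∀ i : Fin m, R.X (i : ℕ) ω = sgn (e i)) → Q e) :
    R.P A ≤ ((Finset.univ.filter Q).card : ℝ≥0∞) * (2 ^ m : ℝ≥0∞)⁻¹ := by
  have hsub : A ⊆ ⋃ e ∈ Finset.univ.filter Q,
      {ω | ∀ i : Fin m, R.X (i : ℕ) ω = sgn (e i)} := by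
    intro ω hω
    have hpat : ∀ i : Fin m,
        R.X (i : ℕ) ω = sgn ((fun j : Fin m => decide (R.X (j : ℕ) ω = 1)) i) := by
      intro i
      rcases R.vals (i : ℕ) ω with h1 | h1 <;> simp [h1, sgn]
    exact Set.mem_iUnion₂.2 ⟨_, Finset.mem_filter.2 ⟨Finset.mem_univ _, hA ω hω _ hpat⟩, hpat⟩
  calc R.P A ≤ ∑ e ∈ Finset.univ.filter Q,
        R.P {ω | ∀ i : Fin m, R.X (i : ℕ) ω = sgn (e i)} :=
        le_trans (measure_mono hsub) (measure_biUnion_finset_le _ _)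
    _ = ∑ _e ∈ Finset.univ.filter Q, (2 ^ m : ℝ≥0∞)⁻¹ :=
        Finset.sum_congr rfl fun e _ => cylinder_meas R m e
    _ = ((Finset.univ.filter Q).card : ℝ≥0∞) * (2 ^ m : ℝ≥0∞)⁻¹ := by
        rw [Finset.sum_const, nsmul_eq_mul]

lemma S_eq_pse (R : RW Ω) (ω : Ω) {m : ℕ} (e : Fin m → Bool)
    (hpat : ∀ i : Fin m, R.X (i : ℕ) ω = sgn (e i)) {k : ℕ} (hk : k ≤ m) :
    R.S k ω = pse e k := by
  induction k with
  | zero => simp [RW.S, pse_zero]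
  | succ k ih =>
    have hkm : k < m := hk
    have hS : R.S (k + 1) ω = R.S k ω + R.X k ω := by
      unfold RW.S
      rw [Finset.sum_range_succ]
    rw [hS, ih (le_of_lt hkm), pse_succ e hkm, hpat ⟨k, hkm⟩]

lemma count_prob_eq (c m : ℕ) :
    (c : ℝ≥0∞) * (2 ^ m : ℝ≥0∞)⁻¹ = ENNReal.ofReal ((c : ℝ) / 2 ^ m) := by
  rw [ENNReal.ofReal_div_of_pos (by positivity), div_eq_mul_inv]
  congr 1
  · exact (ENNReal.ofReal_natCast c).symm
  · congr 1
    rw [ENNReal.ofReal_pow (by norm_num : (0:ℝ) ≤ 2)]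
    norm_num

end Bridge

section Interp

lemma interp_natCast (w : ℕ → ℤ) (k : ℕ) : interp w (k : ℝ) = w k := by
  unfold interp
  rw [Nat.floor_natCast]
  push_cast
  ring

lemma interp_ge_min (w : ℕ → ℤ) (t : ℝ) (ht : 0 ≤ t) :
    min ((w ⌊t⌋₊ : ℝ)) ((w (⌊t⌋₊ + 1) : ℝ)) ≤ interp w t := by
  unfold interp
  have h1 : (⌊t⌋₊ : ℝ) ≤ t := Nat.floor_le ht
  have h2 : t < ⌊t⌋₊ + 1 := Nat.lt_floor_add_one t
  have c1 : (0:ℝ) ≤ (⌊t⌋₊ + 1 : ℝ) - t := by push_cast; linarith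
  have c2 : (0:ℝ) ≤ t - (⌊t⌋₊ : ℝ) := by linarith
  have hma : min ((w ⌊t⌋₊ : ℝ)) ((w (⌊t⌋₊ + 1) : ℝ)) ≤ (w ⌊t⌋₊ : ℝ) := min_le_left _ _
  have hmb : min ((w ⌊t⌋₊ : ℝ)) ((w (⌊t⌋₊ + 1) : ℝ)) ≤ (w (⌊t⌋₊ + 1) : ℝ) := min_le_right _ _
  nlinarith [mul_le_mul_of_nonneg_left hma c1, mul_le_mul_of_nonneg_left hmb c2]

lemma interp_sub_abs (w : ℕ → ℤ) (t : ℝ) (ht : 0 ≤ t) :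
    |interp w t - (w ⌊t⌋₊ : ℝ)| ≤ |(w (⌊t⌋₊ + 1) : ℝ) - (w ⌊t⌋₊ : ℝ)| := by
  have key : interp w t - (w ⌊t⌋₊ : ℝ)
      = (t - (⌊t⌋₊ : ℝ)) * ((w (⌊t⌋₊ + 1) : ℝ) - (w ⌊t⌋₊ : ℝ)) := by
    unfold interp; ring
  rw [key, abs_mul]
  have h1 : (⌊t⌋₊ : ℝ) ≤ t := Nat.floor_le ht
  have h2 : t < ⌊t⌋₊ + 1 := Nat.lt_floor_add_one t
  have : |t - (⌊t⌋₊ : ℝ)| ≤ 1 := by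
    rw [abs_le]; constructor <;> push_cast <;> linarith
  exact mul_le_of_le_one_left (abs_nonneg _) this

lemma S_step_abs {Ω : Type} [MeasurableSpace Ω] (R : RW Ω) (ω : Ω) (k : ℕ) :
    |(R.S (k + 1) ω : ℝ) - (R.S k ω : ℝ)| ≤ 1 := by
  have hS : R.S (k + 1) ω = R.S k ω + R.X k ω := by
    unfold RW.S; rw [Finset.sum_range_succ]
  rw [hS]
  push_cast
  rcases R.vals k ω with h | h <;> rw [h] <;> norm_num

end Interp

section MainProof

open MeasureTheory ProbabilityTheory
open scoped ENNReal Classical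

variable {Ω : Type} [MeasurableSpace Ω]

lemma windowA (m : ℕ) (d a b : ℝ) (hd : 0 < d) :
    (Finset.univ.filter fun e : Fin m → Bool => d * (pse e m : ℝ) ∈ Set.Ioc a b).card
      ≤ (⌊b / d⌋ - ⌊a / d⌋).toNat * m.choose (m / 2) := by
  refine le_trans (Finset.card_le_card ?_) (count_Ioc m ⌊a / d⌋ ⌊b / d⌋)
  intro e he
  rw [Finset.mem_filter, Set.mem_Ioc] at he
  obtain ⟨-, h1, h2⟩ := he
  rw [Finset.mem_filter, Set.mem_Ioc]
  refine ⟨Finset.mem_univ _, ?_, ?_⟩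
  · rw [Int.floor_lt, div_lt_iff₀ hd]
    nlinarith
  · rw [Int.le_floor, le_div_iff₀ hd]
    nlinarith

lemma toNat_cast_le_real (z : ℤ) (x : ℝ) (h0 : 0 ≤ x) (h : (z : ℝ) ≤ x) :
    ((z.toNat : ℕ) : ℝ) ≤ x := by
  rcases le_or_gt z 0 with h1 | h1
  · rw [Int.toNat_of_nonpos h1]; simpa using h0
  · have hz : ((z.toNat : ℕ) : ℤ) = z := Int.toNat_of_nonneg h1.le
    have h2 : ((z.toNat : ℕ) : ℝ) = (z : ℝ) := by exact_mod_cast hz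
    rw [h2]; exact h

lemma inv_sqrt_le (x d : ℝ) (hd : 0 < d) (hx : 1 / (4 * d ^ 2) ≤ x) :
    (Real.sqrt x)⁻¹ ≤ 2 * d := by
  have hx0 : 0 < x := lt_of_lt_of_le (by positivity) hx
  have h1 : 1 / (2 * d) ≤ Real.sqrt x := by
    have hsq : 1 / (4 * d ^ 2) = (1 / (2 * d)) ^ 2 := by field_simp; ring
    rw [hsq] at hx
    calc 1 / (2 * d) = Real.sqrt ((1 / (2 * d)) ^ 2) := (Real.sqrt_sq (by positivity)).symm
      _ ≤ Real.sqrt x := Real.sqrt_le_sqrt hx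
  have hs : 0 < Real.sqrt x := Real.sqrt_pos.2 hx0
  have h2 : (Real.sqrt x)⁻¹ ≤ (1 / (2 * d))⁻¹ := by
    apply inv_anti₀ (by positivity) h1
  rw [one_div, inv_inv] at h2
  exact h2

lemma count_ratio_le (m : ℕ) (hm : 1 ≤ m) :
    (m.choose (m / 2) : ℝ) / 2 ^ m ≤ (Real.sqrt m)⁻¹ := by
  have hs : (0:ℝ) < Real.sqrt m := Real.sqrt_pos.2 (by exact_mod_cast hm)
  calc (m.choose (m / 2) : ℝ) / 2 ^ m ≤ (2 ^ m / Real.sqrt m) / 2 ^ m := by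
        gcongr
        exact middle_le m hm
    _ = (Real.sqrt m)⁻¹ := by field_simp

set_option maxHeartbeats 3000000 in
theorem exceptional_thm5_aux (R : RW Ω) (α : ℝ) (hα : 0 < α) (hα2 : α < 1 / 2) :
    ∃ c' : ℝ, 0 < c' ∧ ∀ δ : ℝ, δ ∈ Set.Ioc (0 : ℝ) 1 → ∀ Δ : ℝ, δ ≤ Δ →
      (R.P {ω | rescale δ (R.path ω) ∈ OPlus (Δ ^ α) ∧
        ¬ OEvent (rescale δ (R.path ω))}).toReal ≤ c' * Δ ^ α := by
  haveI := R.prob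
  refine ⟨100, by norm_num, ?_⟩
  rintro δ ⟨hδ0, hδ1⟩ Δ hδΔ
  have hΔ0 : 0 < Δ := lt_of_lt_of_le hδ0 hδΔ
  have hr0 : 0 < Δ ^ α := Real.rpow_pos_of_pos hΔ0 α
  have htriv : (R.P {ω | rescale δ (R.path ω) ∈ OPlus (Δ ^ α) ∧
      ¬ OEvent (rescale δ (R.path ω))}).toReal ≤ 1 := by
    refine ENNReal.toReal_le_of_le_ofReal (by norm_num) ?_
    rw [ENNReal.ofReal_one]
    exact le_trans (measure_mono (Set.subset_univ _)) (le_of_eq measure_univ)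
  rcases le_or_gt 1 Δ with hbig | hΔ1
  · have h1r : 1 ≤ Δ ^ α := by
      calc (1:ℝ) = Δ ^ (0:ℝ) := (Real.rpow_zero Δ).symm
        _ ≤ Δ ^ α := Real.rpow_le_rpow_of_exponent_le hbig hα.le
    refine le_trans htriv ?_
    nlinarith
  have hΔr : Δ ≤ Δ ^ α := by
    calc Δ = Δ ^ (1:ℝ) := (Real.rpow_one Δ).symm
      _ ≤ Δ ^ α := Real.rpow_le_rpow_of_exponent_ge hΔ0 hΔ1.le (by linarith)
  have hδr : δ ≤ Δ ^ α := le_trans hδΔ hΔr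
  rcases le_or_gt (1/2 : ℝ) δ with hδbig | hδsmall
  · refine le_trans htriv ?_
    nlinarith
  -- ===== main case =====
  set r := Δ ^ α with hrdef
  have hr1 : r ≤ 1 := Real.rpow_le_one hΔ0.le hΔ1.le hα.le
  set u : ℝ := 1 / δ ^ 2 with hudef
  have hu0 : (0:ℝ) ≤ u := by positivity
  have hu4 : (4:ℝ) < u := by
    rw [hudef, lt_div_iff₀ (by positivity)]
    nlinarith
  set n := ⌊u⌋₊ with hndef
  have hn_le : (n : ℝ) ≤ u := Nat.floor_le hu0
  have hn_gt : u < (n:ℝ) + 1 := Nat.lt_floor_add_one u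
  have hn4 : (4 : ℝ) ≤ (n:ℝ) := by
    have h4 : (4 : ℕ) ≤ n := Nat.le_floor (by push_cast; linarith)
    exact_mod_cast h4
  have hn1 : 1 ≤ n := by
    have : (1:ℝ) ≤ (n:ℝ) := by linarith
    exact_mod_cast this
  have hN1 : 1 ≤ n + 1 := by omega
  have hsqn : (Real.sqrt n)⁻¹ ≤ 2 * δ := by
    apply inv_sqrt_le _ _ hδ0
    have h2 : 1 / (4 * δ ^ 2) = u / 4 := by rw [hudef]; ring
    rw [h2]; linarith
  have hsqN : (Real.sqrt ((n:ℕ)+1))⁻¹ ≤ 2 * δ := by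
    apply inv_sqrt_le _ _ hδ0
    have h2 : 1 / (4 * δ ^ 2) = u / 4 := by rw [hudef]; ring
    rw [h2]; push_cast; linarith
  set c₁ : ℤ := ⌈1 / δ⌉ with hc1def
  set c₂ : ℤ := ⌊(1 + r + δ) / δ⌋ + 1 with hc2def
  have hrpos : (0:ℝ) < r := hr0
  have hc1_ge : (1:ℤ) ≤ c₁ := by
    have h1 : (1:ℝ) ≤ 1 / δ := by rw [le_div_iff₀ hδ0]; linarith
    calc (1:ℤ) = ⌈(1:ℝ)⌉ := by norm_num
      _ ≤ ⌈1 / δ⌉ := Int.ceil_le_ceil h1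
  have hy_ge : 1 / δ ≤ (1 + r + δ) / δ := by
    rw [div_le_div_iff₀ hδ0 hδ0]
    nlinarith
  have hc12 : c₁ ≤ c₂ := by
    have h1 : (c₁ : ℝ) < 1 / δ + 1 := Int.ceil_lt_add_one (1 / δ)
    have h2 : ((c₁ - 1 : ℤ) : ℝ) ≤ (1 + r + δ) / δ := by push_cast; linarith [hy_ge]
    have h3 : (c₁ - 1 : ℤ) ≤ ⌊(1 + r + δ) / δ⌋ := Int.le_floor.2 h2
    omega
  -- integerization helpers
  have int_le : ∀ s : ℤ, δ * (s:ℝ) ≤ -1 → s ≤ -c₁ := by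
    intro s hs
    have h1 : (1:ℝ)/δ ≤ ((-s : ℤ) : ℝ) := by
      push_cast
      rw [div_le_iff₀ hδ0]
      nlinarith
    have h2 : c₁ ≤ -s := Int.ceil_le.2 h1
    omega
  have int_gt : ∀ s : ℤ, -(1 + r + δ) < δ * (s:ℝ) → -c₂ < s := by
    intro s hs
    have h1 : ((-s : ℤ):ℝ) ≤ (1 + r + δ)/δ := by
      push_cast
      rw [le_div_iff₀ hδ0]
      nlinarith
    have h2 : (-s : ℤ) ≤ ⌊(1 + r + δ) / δ⌋ := Int.le_floor.2 h1
    omega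
  have hδ2 : (0:ℝ) < δ ^ 2 := by positivity
  -- ===== event inclusion =====
  have hincl : {ω | rescale δ (R.path ω) ∈ OPlus r ∧ ¬ OEvent (rescale δ (R.path ω))}
      ⊆ {ω | δ * (R.S n ω : ℝ) ∈ Set.Ioc (1 - r - δ) (1 + δ)}
        ∪ {ω | (∃ k ≤ n + 1, R.S k ω ≤ -c₁) ∧ ∀ k ≤ n + 1, -c₂ < R.S k ω} := by
    intro ω hω
    obtain ⟨⟨g, hgc, ⟨hg1, hg2⟩, hgr⟩, hnot⟩ := hω
    have hft : ∀ t : ℝ, rescale δ (R.path ω) t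
        = δ * interp (fun k => R.S k ω) (t / δ ^ 2) := fun t => rfl
    have hflow : ∀ t ∈ Set.Icc (0:ℝ) 1, -1 - r < rescale δ (R.path ω) t := by
      intro t ht
      have h1 := abs_le.1 (hgr t ht)
      have h2 := hg1 t ht
      linarith [h1.1]
    have hfend : 1 - r < rescale δ (R.path ω) 1 := by
      have h1 := abs_le.1 (hgr 1 (by norm_num))
      linarith [h1.1, hg2]
    have hwalk_lb : ∀ k ≤ n + 1, -(1 + r + δ) < δ * (R.S k ω : ℝ) := by
      intro k hk
      rcases Nat.lt_or_ge k (n+1) with hk' | hk'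
      · have hkn : (k:ℝ) ≤ (n:ℝ) := by exact_mod_cast Nat.lt_succ_iff.1 hk'
        have htk : (k:ℝ) * δ ^ 2 ∈ Set.Icc (0:ℝ) 1 := by
          constructor
          · positivity
          · have h3 : (k:ℝ) ≤ u := le_trans hkn hn_le
            have h4 : u * δ ^ 2 = 1 := by rw [hudef]; field_simp
            nlinarith
        have hval := hflow _ htk
        have heq : rescale δ (R.path ω) ((k:ℝ) * δ ^ 2) = δ * (R.S k ω : ℝ) := by
          rw [hft, mul_div_assoc, div_self (ne_of_gt hδ2), mul_one, interp_natCast]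
        rw [heq] at hval
        linarith
      · have hk2 : k = n + 1 := by omega
        subst hk2
        have hstep := abs_le.1 (S_step_abs R ω n)
        have htk : (n:ℝ) * δ ^ 2 ∈ Set.Icc (0:ℝ) 1 := by
          constructor
          · positivity
          · have h4 : u * δ ^ 2 = 1 := by rw [hudef]; field_simp
            nlinarith
        have hval := hflow _ htk
        have heq : rescale δ (R.path ω) ((n:ℝ) * δ ^ 2) = δ * (R.S n ω : ℝ) := by
          rw [hft, mul_div_assoc, div_self (ne_of_gt hδ2), mul_one, interp_natCast]
        rw [heq] at hval
        nlinarith [hstep.1, hstep.2]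
    rw [OEvent, not_and_or] at hnot
    rcases hnot with hnot | hnot
    · -- the path drops to -1 somewhere : event B
      push_neg at hnot
      obtain ⟨t, ht, hft1⟩ := hnot
      right
      refine ⟨?_, fun k hk => int_gt _ (hwalk_lb k hk)⟩
      have hv0 : (0:ℝ) ≤ t / δ ^ 2 := div_nonneg ht.1 hδ2.le
      have hvu : t / δ ^ 2 ≤ u := by
        rw [hudef]
        rw [div_le_div_iff₀ hδ2 hδ2]
        nlinarith [ht.2]
      have hkn : ⌊t / δ ^ 2⌋₊ ≤ n := Nat.floor_le_floor hvu
      have hmin := interp_ge_min (fun k => R.S k ω) (t / δ ^ 2) hv0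
      have hfle : δ * interp (fun k => R.S k ω) (t / δ ^ 2) ≤ -1 := by
        rw [← hft t]; exact hft1
      set k0 := ⌊t / δ ^ 2⌋₊ with hk0def
      rcases le_total ((R.S k0 ω : ℝ)) ((R.S (k0+1) ω : ℝ)) with hmm | hmm
      · refine ⟨k0, by omega, int_le _ ?_⟩
        rw [min_eq_left hmm] at hmin
        nlinarith
      · refine ⟨k0 + 1, by omega, int_le _ ?_⟩
        rw [min_eq_right hmm] at hmin
        nlinarith
    · -- endpoint at most 1 : event A
      push_neg at hnot
      left
      have hfu : rescale δ (R.path ω) 1 = δ * interp (fun k => R.S k ω) u := by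
        rw [hft, hudef]
      have habs : |interp (fun k => R.S k ω) u - (R.S n ω : ℝ)| ≤ 1 := by
        have h1 := interp_sub_abs (fun k => R.S k ω) u hu0
        have h2 := S_step_abs R ω n
        rw [← hndef] at h1
        calc |interp (fun k => R.S k ω) u - (R.S n ω : ℝ)|
            ≤ |((R.S (n+1) ω : ℤ) : ℝ) - ((R.S n ω : ℤ) : ℝ)| := h1
          _ ≤ 1 := h2
      have hb := abs_le.1 habs
      rw [Set.mem_setOf_eq, Set.mem_Ioc]
      rw [hfu] at hfend hnot
      constructor
      · nlinarith [hb.2]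
      · nlinarith [hb.1]
  -- ===== probability bounds =====
  have hPA : R.P {ω | δ * (R.S n ω : ℝ) ∈ Set.Ioc (1 - r - δ) (1 + δ)}
      ≤ ENNReal.ofReal (8 * r) := by
    have hbr := prob_le_count R n
      {ω | δ * (R.S n ω : ℝ) ∈ Set.Ioc (1 - r - δ) (1 + δ)}
      (fun e : Fin n → Bool => δ * (pse e n : ℝ) ∈ Set.Ioc (1 - r - δ) (1 + δ))
      (fun ω hω e hpat => by
        show δ * (pse e n : ℝ) ∈ Set.Ioc (1 - r - δ) (1 + δ)
        rw [← S_eq_pse R ω e hpat le_rfl]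
        exact hω)
    refine le_trans hbr ?_
    rw [count_prob_eq]
    apply ENNReal.ofReal_le_ofReal
    have hcard := windowA n δ (1 - r - δ) (1 + δ) hδ0
    have hDA : (((⌊(1 + δ) / δ⌋ - ⌊(1 - r - δ) / δ⌋).toNat : ℕ) : ℝ) ≤ r / δ + 3 := by
      apply toNat_cast_le_real _ _ (by positivity)
      have e1 : (1 + δ)/δ - (1 - r - δ)/δ = r/δ + 2 := by field_simp; ring
      push_cast
      linarith [Int.floor_le ((1 + δ)/δ), Int.sub_one_lt_floor ((1 - r - δ)/δ)]
    have hratio := count_ratio_le n hn1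
    have hchoose_nonneg : (0:ℝ) ≤ (n.choose (n / 2) : ℝ) := by positivity
    calc ((Finset.univ.filter fun e : Fin n → Bool =>
            δ * (pse e n : ℝ) ∈ Set.Ioc (1 - r - δ) (1 + δ)).card : ℝ) / 2 ^ n
        ≤ ((((⌊(1 + δ) / δ⌋ - ⌊(1 - r - δ) / δ⌋).toNat : ℕ) : ℝ)
            * (n.choose (n / 2) : ℝ)) / 2 ^ n := by
          gcongr
          exact_mod_cast hcard
      _ = (((⌊(1 + δ) / δ⌋ - ⌊(1 - r - δ) / δ⌋).toNat : ℕ) : ℝ)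
            * ((n.choose (n / 2) : ℝ) / 2 ^ n) := by ring
      _ ≤ (r / δ + 3) * (2 * δ) := by
          apply mul_le_mul hDA (le_trans hratio hsqn) (by positivity) (by positivity)
      _ = 2 * r + 6 * δ := by field_simp; ring
      _ ≤ 8 * r := by linarith
  have hPB : R.P {ω | (∃ k ≤ n + 1, R.S k ω ≤ -c₁) ∧ ∀ k ≤ n + 1, -c₂ < R.S k ω}
      ≤ ENNReal.ofReal (12 * r) := by
    have hbr := prob_le_count R (n+1)
      {ω | (∃ k ≤ n + 1, R.S k ω ≤ -c₁) ∧ ∀ k ≤ n + 1, -c₂ < R.S k ω}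
      (fun e : Fin (n+1) → Bool => (∃ k, pse e k ≤ -c₁) ∧ ∀ k, -c₂ < pse e k)
      (fun ω hω e hpat => by
        obtain ⟨⟨k, hk, hle⟩, hall⟩ := hω
        constructor
        · exact ⟨k, by rw [← S_eq_pse R ω e hpat hk]; exact hle⟩
        · intro k
          rcases le_or_gt k (n+1) with hk' | hk'
          · rw [← S_eq_pse R ω e hpat hk']; exact hall k hk'
          · rw [pse_stable e hk'.le, ← S_eq_pse R ω e hpat le_rfl]
            exact hall (n+1) le_rfl)
    refine le_trans hbr ?_
    rw [count_prob_eq]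
    apply ENNReal.ofReal_le_ofReal
    have hcard := windowB (n+1) c₁ c₂ hc1_ge hc12
    have hDB : (((c₂ - c₁).toNat : ℕ) : ℝ) ≤ r / δ + 2 := by
      apply toNat_cast_le_real _ _ (by positivity)
      have e1 : (1 + r + δ)/δ + 1 - 1/δ = r/δ + 2 := by field_simp; ring
      push_cast [hc2def, hc1def]
      linarith [Int.floor_le ((1 + r + δ)/δ), Int.le_ceil (1/δ)]
    have hratio := count_ratio_le (n+1) hN1
    calc ((Finset.univ.filter fun e : Fin (n+1) → Bool =>
            (∃ k, pse e k ≤ -c₁) ∧ ∀ k, -c₂ < pse e k).card : ℝ) / 2 ^ (n+1)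
        ≤ (2 * ((((c₂ - c₁).toNat : ℕ) : ℝ) * ((n+1).choose ((n+1) / 2) : ℝ))) / 2 ^ (n+1) := by
          gcongr
          exact_mod_cast hcard
      _ = 2 * ((((c₂ - c₁).toNat : ℕ) : ℝ)
            * (((n+1).choose ((n+1) / 2) : ℝ) / 2 ^ (n+1))) := by ring
      _ ≤ 2 * ((r / δ + 2) * (2 * δ)) := by
          apply mul_le_mul_of_nonneg_left ?_ (by norm_num)
          apply mul_le_mul hDB ?_ (by positivity) (by positivity)
          refine le_trans hratio ?_
          push_cast
          exact_mod_cast hsqN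
      _ = 4 * r + 8 * δ := by field_simp; ring
      _ ≤ 12 * r := by linarith
  have hPE : R.P {ω | rescale δ (R.path ω) ∈ OPlus r ∧ ¬ OEvent (rescale δ (R.path ω))}
      ≤ ENNReal.ofReal (20 * r) := by
    calc R.P {ω | rescale δ (R.path ω) ∈ OPlus r ∧ ¬ OEvent (rescale δ (R.path ω))}
        ≤ R.P ({ω | δ * (R.S n ω : ℝ) ∈ Set.Ioc (1 - r - δ) (1 + δ)}
            ∪ {ω | (∃ k ≤ n + 1, R.S k ω ≤ -c₁) ∧ ∀ k ≤ n + 1, -c₂ < R.S k ω}) :=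
          measure_mono hincl
      _ ≤ R.P {ω | δ * (R.S n ω : ℝ) ∈ Set.Ioc (1 - r - δ) (1 + δ)}
            + R.P {ω | (∃ k ≤ n + 1, R.S k ω ≤ -c₁) ∧ ∀ k ≤ n + 1, -c₂ < R.S k ω} :=
          measure_union_le _ _
      _ ≤ ENNReal.ofReal (8 * r) + ENNReal.ofReal (12 * r) := add_le_add hPA hPB
      _ = ENNReal.ofReal (20 * r) := by
          rw [← ENNReal.ofReal_add (by positivity) (by positivity)]
          congr 1
          ring
  refine le_trans (ENNReal.toReal_le_of_le_ofReal (by positivity) hPE) ?_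
  linarith

end MainProof


/-- For any `0 < α < 1/2` there is `c' ∈ (0,∞)`, independent of `Δ` and `δ`, such that
`P(S̃ ∈ (O+Δ^α) \ O) ≤ c'·Δ^α`, where `S` is a simple symmetric random walk. -/
theorem exceptional_times_thm5 (R : RW Ω) (α : ℝ) (hα : 0 < α) (hα2 : α < 1 / 2) :
    ∃ c' : ℝ, 0 < c' ∧ ∀ δ : ℝ, δ ∈ Set.Ioc (0 : ℝ) 1 → ∀ Δ : ℝ, δ ≤ Δ →
      (R.P {ω | rescale δ (R.path ω) ∈ OPlus (Δ ^ α) ∧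
        ¬ OEvent (rescale δ (R.path ω))}).toReal ≤ c' * Δ ^ α :=
  exceptional_thm5_aux R α hα hα2

end DyDWPaper
end
end

section
/- For a continuous function f on [0,1], let ω_f(ε) = sup{|f(t)−f(s)| : s,t ∈ [0,1], |s−t| < ε} denote its modulus of continuity. Let α, β ∈ (0,∞) with β/2 > α. For any r ≥ 0 there exists c ∈ (0,∞), independent of Δ and δ, such that for all δ ∈ (0,1] and all Δ > 0, P(ω_{S̃}(Δ^β) ≥ Δ^α/2) ≤ c·Δ^r, where S is a simple symmetric random walk. -/
open MeasureTheory ProbabilityTheory Filter Set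
open scoped ENNReal NNReal

noncomputable section

namespace DyDWPaper

variable {Ω Ω' : Type} [MeasurableSpace Ω] [MeasurableSpace Ω']

variable {Ω : Type} [MeasurableSpace Ω]

/-- difference of interpolations bounded by max over corner differences -/
lemma interp_diff_le (w : ℕ → ℤ) {a b B : ℝ} (ha : 0 ≤ a) (hb : 0 ≤ b)
    (H : ∀ j k : ℕ, (j = ⌊a⌋₊ ∨ j = ⌊a⌋₊ + 1) → (k = ⌊b⌋₊ ∨ k = ⌊b⌋₊ + 1) →
      |(w k : ℝ) - (w j : ℝ)| ≤ B) :
    |interp w b - interp w a| ≤ B := by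
  have h11 := H ⌊a⌋₊ ⌊b⌋₊ (Or.inl rfl) (Or.inl rfl)
  have h12 := H (⌊a⌋₊ + 1) ⌊b⌋₊ (Or.inr rfl) (Or.inl rfl)
  have h21 := H ⌊a⌋₊ (⌊b⌋₊ + 1) (Or.inl rfl) (Or.inr rfl)
  have h22 := H (⌊a⌋₊ + 1) (⌊b⌋₊ + 1) (Or.inr rfl) (Or.inr rfl)
  have hc1 : 0 ≤ ((⌊b⌋₊ : ℝ) + 1) - b := by
    have := Nat.lt_floor_add_one b; linarith
  have hc2 : 0 ≤ b - (⌊b⌋₊ : ℝ) := by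
    have := Nat.floor_le hb; linarith
  have hd1 : 0 ≤ ((⌊a⌋₊ : ℝ) + 1) - a := by
    have := Nat.lt_floor_add_one a; linarith
  have hd2 : 0 ≤ a - (⌊a⌋₊ : ℝ) := by
    have := Nat.floor_le ha; linarith
  rw [abs_le] at h11 h12 h21 h22 ⊢
  unfold interp
  constructor <;> nlinarith [mul_nonneg hc1 hd1, mul_nonneg hc1 hd2, mul_nonneg hc2 hd1,
    mul_nonneg hc2 hd2, h11.1, h11.2, h12.1, h12.2, h21.1, h21.2, h22.1, h22.2]

/-- interpolation at an integer point -/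
lemma interp_nat (w : ℕ → ℤ) (n : ℕ) : interp w n = (w n : ℝ) := by
  unfold interp
  rw [Nat.floor_natCast]
  ring

lemma interp_lip_aux (w : ℕ → ℤ) (hw : ∀ n, |(w (n + 1) : ℝ) - (w n : ℝ)| ≤ 1) :
    ∀ n : ℕ, ∀ a : ℝ, 0 ≤ a → a ≤ n → |(w n : ℝ) - interp w a| ≤ n - a := by
  intro n
  induction n with
  | zero =>
    intro a ha ha'
    have : a = 0 := le_antisymm (by exact_mod_cast ha') ha
    subst this
    rw [show ((0:ℝ)) = ((0:ℕ):ℝ) by norm_num, interp_nat]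
    simp
  | succ n ih =>
    intro a ha ha'
    by_cases hc : a ≤ n
    · calc |(w (n+1) : ℝ) - interp w a|
          ≤ |(w (n+1) : ℝ) - (w n : ℝ)| + |(w n : ℝ) - interp w a| := abs_sub_le _ _ _
        _ ≤ 1 + ((n : ℝ) - a) := add_le_add (hw n) (ih a ha hc)
        _ ≤ (n+1 : ℕ) - a := by push_cast; linarith
    · push_neg at hc
      by_cases he : a = (n + 1 : ℕ)
      · subst he
        rw [interp_nat]; simp
      · have hfl : ⌊a⌋₊ = n := by
          rw [Nat.floor_eq_iff ha]
          constructor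
          · exact_mod_cast hc.le
          · push_cast
            rcases lt_or_eq_of_le ha' with h | h
            · exact_mod_cast h
            · exact absurd h he
        unfold interp
        rw [hfl]
        have h1 : ((n:ℝ) + 1 - a) * (w n : ℝ) + (a - n) * (w (n+1) : ℝ) =
            (w (n+1) : ℝ) - ((n:ℝ) + 1 - a) * ((w (n+1) : ℝ) - (w n : ℝ)) := by ring
        rw [h1]
        have h2 : |(w (n+1) : ℝ) - ((w (n+1) : ℝ) - ((n:ℝ) + 1 - a) * ((w (n+1) : ℝ) - (w n : ℝ)))|
            = ((n:ℝ) + 1 - a) * |(w (n+1) : ℝ) - (w n : ℝ)| := by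
          rw [show (w (n+1) : ℝ) - ((w (n+1) : ℝ) - ((n:ℝ) + 1 - a) * ((w (n+1) : ℝ) - (w n : ℝ)))
            = ((n:ℝ) + 1 - a) * ((w (n+1) : ℝ) - (w n : ℝ)) by ring, abs_mul,
            abs_of_nonneg (by push_cast at ha' ⊢; linarith)]
        rw [h2]
        have h3 := hw n
        have h4 : (0:ℝ) ≤ (n:ℝ) + 1 - a := by push_cast at ha' ⊢; linarith
        calc ((n:ℝ) + 1 - a) * |(w (n+1) : ℝ) - (w n : ℝ)| ≤ ((n:ℝ) + 1 - a) * 1 :=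
              mul_le_mul_of_nonneg_left h3 h4
          _ = ((n+1:ℕ):ℝ) - a := by push_cast; ring

/-- 1-Lipschitz property of interpolation of ±1-step walks -/
lemma interp_lip (w : ℕ → ℤ) (hw : ∀ n, |(w (n + 1) : ℝ) - (w n : ℝ)| ≤ 1)
    {a b : ℝ} (ha : 0 ≤ a) (hab : a ≤ b) : |interp w b - interp w a| ≤ b - a := by
  by_cases hfl : ⌊a⌋₊ = ⌊b⌋₊
  · unfold interp
    rw [hfl]
    have h1 : ((⌊b⌋₊:ℝ) + 1 - b) * (w ⌊b⌋₊ : ℝ) + (b - ⌊b⌋₊) * (w (⌊b⌋₊+1) : ℝ)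
        - (((⌊b⌋₊:ℝ) + 1 - a) * (w ⌊b⌋₊ : ℝ) + (a - ⌊b⌋₊) * (w (⌊b⌋₊+1) : ℝ))
        = (b - a) * ((w (⌊b⌋₊+1) : ℝ) - (w ⌊b⌋₊ : ℝ)) := by ring
    rw [h1, abs_mul, abs_of_nonneg (by linarith)]
    calc (b-a) * |(w (⌊b⌋₊+1) : ℝ) - (w ⌊b⌋₊ : ℝ)| ≤ (b-a) * 1 :=
          mul_le_mul_of_nonneg_left (hw _) (by linarith)
      _ = b - a := mul_one _
  · have hb : 0 ≤ b := le_trans ha hab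
    have hlt : ⌊a⌋₊ < ⌊b⌋₊ := lt_of_le_of_ne (Nat.floor_le_floor hab) hfl
    have han : a < ⌊b⌋₊ := by
      have h1 := Nat.lt_floor_add_one a
      have h2 : (⌊a⌋₊:ℝ) + 1 ≤ (⌊b⌋₊:ℝ) := by exact_mod_cast hlt
      linarith
    have hbn : (⌊b⌋₊:ℝ) ≤ b := Nat.floor_le hb
    calc |interp w b - interp w a|
        ≤ |interp w b - (w ⌊b⌋₊ : ℝ)| + |(w ⌊b⌋₊ : ℝ) - interp w a| := abs_sub_le _ _ _
      _ ≤ (b - ⌊b⌋₊) + ((⌊b⌋₊:ℝ) - a) := by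
          refine add_le_add ?_ (interp_lip_aux w hw ⌊b⌋₊ a ha han.le)
          unfold interp
          have h1 : ((⌊b⌋₊:ℝ) + 1 - b) * (w ⌊b⌋₊ : ℝ) + (b - ⌊b⌋₊) * (w (⌊b⌋₊+1) : ℝ)
              - (w ⌊b⌋₊ : ℝ) = (b - ⌊b⌋₊) * ((w (⌊b⌋₊+1) : ℝ) - (w ⌊b⌋₊ : ℝ)) := by ring
          rw [h1, abs_mul, abs_of_nonneg (by linarith)]
          calc (b - ⌊b⌋₊) * |(w (⌊b⌋₊+1) : ℝ) - (w ⌊b⌋₊ : ℝ)| ≤ (b - ⌊b⌋₊) * 1 :=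
                mul_le_mul_of_nonneg_left (hw _) (by linarith)
            _ = b - ⌊b⌋₊ := mul_one _
      _ = b - a := by ring



/-- dyadic chaining bound for a discrete path -/
lemma chain_bound (v : ℕ → ℝ) (b : ℕ → ℝ) (hb : ∀ p, 0 ≤ b p) (N P' : ℕ)
    (H : ∀ p ≤ P', ∀ i : ℕ, (i + 1) * 2 ^ p ≤ N → |v ((i+1) * 2^p) - v (i * 2^p)| ≤ b p) :
    ∀ j k, j ≤ k → k ≤ N → k - j ≤ 2 ^ P' →
      |v k - v j| ≤ 2 * ∑ p ∈ Finset.range (P' + 1), b p := by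
  -- descent lemma
  have descent : ∀ p ≤ P', ∀ j ≤ N, |v j - v (2^p * (j / 2^p))| ≤ ∑ p' ∈ Finset.range p, b p' := by
    intro p
    induction p with
    | zero => intro _ j _; simp
    | succ p ih =>
      intro hp j hj
      have hp' : p ≤ P' := le_trans (Nat.le_succ p) hp
      have key : j / 2 ^ (p+1) = (j / 2^p) / 2 := by
        rw [pow_succ, Nat.div_div_eq_div_mul]
      set t := j / 2 ^ p with ht
      rcases Nat.even_or_odd t with he | ho
      · have : 2 ^ (p+1) * (j / 2^(p+1)) = 2 ^ p * t := by
          rw [key, pow_succ]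
          obtain ⟨c, hc⟩ := he
          rw [hc, show c + c = 2 * c by ring, Nat.mul_div_cancel_left c (by norm_num)]
          ring
        rw [this]
        calc |v j - v (2^p * t)| ≤ ∑ p' ∈ Finset.range p, b p' := ih hp' j hj
          _ ≤ ∑ p' ∈ Finset.range (p+1), b p' := by
              rw [Finset.sum_range_succ]; linarith [hb p]
      · obtain ⟨c, hc⟩ := ho
        have h1 : 2 ^ (p+1) * (j / 2^(p+1)) = 2 ^ p * (2 * c) := by
          rw [key, hc, Nat.mul_add_div (by norm_num), pow_succ]
          simp [Nat.div_eq_of_lt]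
          ring
        have h2 : 2 ^ p * t = (2 * c + 1) * 2 ^ p := by rw [hc]; ring
        have h3 : (2 * c + 1) * 2 ^ p ≤ N := by
          calc (2 * c + 1) * 2 ^ p = 2 ^ p * t := h2.symm
            _ ≤ j := Nat.mul_div_le j (2^p)
            _ ≤ N := hj
        have h4 := H p hp' (2 * c) h3
        calc |v j - v (2^(p+1) * (j / 2^(p+1)))|
            ≤ |v j - v (2^p * t)| + |v (2^p * t) - v (2^(p+1) * (j / 2^(p+1)))| := abs_sub_le _ _ _
          _ ≤ (∑ p' ∈ Finset.range p, b p') + b p := by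
              refine add_le_add (ih hp' j hj) ?_
              rw [h1, h2]
              rw [show (2:ℕ)^p * (2 * c) = 2 * c * 2 ^ p by ring]
              exact h4
          _ = ∑ p' ∈ Finset.range (p+1), b p' := (Finset.sum_range_succ b p).symm
  intro j k hjk hkN hdiff
  have hjN : j ≤ N := le_trans hjk hkN
  have hd1 := descent P' le_rfl j hjN
  have hd2 := descent P' le_rfl k hkN
  -- top level
  have htop : |v (2^P' * (k / 2^P')) - v (2^P' * (j / 2^P'))| ≤ b P' := by
    have h1 : j / 2^P' ≤ k / 2^P' := Nat.div_le_div_right hjk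
    have h2 : k / 2^P' ≤ j / 2^P' + 1 := by
      have : k ≤ j + 2^P' := by omega
      calc k / 2^P' ≤ (j + 2^P') / 2^P' := Nat.div_le_div_right this
        _ = j / 2^P' + 1 := by rw [Nat.add_div_right _ (Nat.pow_pos (n := P') (by norm_num))]
    rcases Nat.eq_or_lt_of_le h1 with he | hl
    · rw [he]; simp [hb P']
    · have he : k / 2^P' = j / 2^P' + 1 := by omega
      rw [he]
      have h3 : (j / 2^P' + 1) * 2^P' ≤ N := by
        calc (j / 2^P' + 1) * 2^P' = 2^P' * (k / 2^P') := by rw [he]; ring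
          _ ≤ k := Nat.mul_div_le k _
          _ ≤ N := hkN
      have := H P' le_rfl (j / 2^P') h3
      calc |v (2^P' * (j / 2^P' + 1)) - v (2^P' * (j / 2^P'))|
          = |v ((j / 2^P' + 1) * 2^P') - v ((j / 2^P') * 2^P')| := by ring_nf
        _ ≤ b P' := this
  have hsum : ∑ p ∈ Finset.range P', b p + b P' = ∑ p ∈ Finset.range (P'+1), b p :=
    (Finset.sum_range_succ b P').symm
  have hnn : 0 ≤ ∑ p ∈ Finset.range P', b p := Finset.sum_nonneg fun i _ => hb i
  calc |v k - v j|
      ≤ |v k - v (2^P' * (k / 2^P'))| + |v (2^P' * (k / 2^P')) - v j| := abs_sub_le _ _ _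
    _ ≤ |v k - v (2^P' * (k / 2^P'))| + (|v (2^P' * (k / 2^P')) - v (2^P' * (j / 2^P'))| +
        |v (2^P' * (j / 2^P')) - v j| ) := by linarith [abs_sub_le (v (2^P' * (k / 2^P'))) (v (2^P' * (j / 2^P'))) (v j)]
    _ ≤ (∑ p ∈ Finset.range P', b p) + (b P' + (∑ p ∈ Finset.range P', b p)) := by
        have := abs_sub_comm (v (2^P' * (j / 2^P'))) (v j)
        refine add_le_add hd2 (add_le_add htop ?_)
        rw [this]; exact hd1
    _ ≤ 2 * ∑ p ∈ Finset.range (P' + 1), b p := by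
        rw [Finset.sum_range_succ]; linarith [hb P']

/-- geometric sum bound -/
lemma geom_sum_le_inv (x : ℝ) (h0 : 0 ≤ x) (h1 : x < 1) (M : ℕ) :
    ∑ u ∈ Finset.range M, x ^ u ≤ 1 / (1 - x) := by
  have h2 : (0:ℝ) < 1 - x := by linarith
  rw [geom_sum_eq (by intro h; rw [h] at h1; linarith) M]
  have h3 : (x ^ M - 1) / (x - 1) = (1 - x ^ M) / (1 - x) := by
    rw [← neg_sub 1 (x^M), ← neg_sub 1 x, neg_div_neg_eq]
  rw [h3]
  have hMp : 0 ≤ x ^ M := pow_nonneg h0 M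
  exact (div_le_div_iff_of_pos_right h2).mpr (by nlinarith)

/-- sums of functions vanishing on odd numbers -/
lemma sum_even_range (h : ℕ → ℝ) (h0 : ∀ k, ¬ Even k → h k = 0) (n : ℕ) :
    ∑ k ∈ Finset.range (2 * n + 1), h k = ∑ j ∈ Finset.range (n + 1), h (2 * j) := by
  induction n with
  | zero => simp
  | succ n ih =>
    have : 2 * (n+1) + 1 = (2*n+1) + 1 + 1 := by ring
    rw [this, Finset.sum_range_succ, Finset.sum_range_succ, ih,
      Finset.sum_range_succ (fun j => h (2*j)) (n+1)]
    have ho : h (2*n+1) = 0 := h0 _ (by simp [Nat.even_add_one, Nat.even_mul])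
    have he : 2*n+1+1 = 2*(n+1) := by ring
    rw [ho, he]
    ring




/-- real-valued increment sum of the walk -/
def Vsum (R : RW Ω) (i n : ℕ) (ω : Ω) : ℝ := ∑ k ∈ Finset.Ico i (i + n), (R.X k ω : ℝ)

lemma measurable_Y (R : RW Ω) (k : ℕ) : Measurable fun ω => (R.X k ω : ℝ) :=
  (measurable_from_top (f := (Int.cast : ℤ → ℝ))).comp (R.meas k)

lemma abs_Y (R : RW Ω) (k : ℕ) (ω : Ω) : |(R.X k ω : ℝ)| = 1 := by
  rcases R.vals k ω with h | h <;> rw [h] <;> norm_num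

lemma measurable_Vsum (R : RW Ω) (i n : ℕ) : Measurable (Vsum R i n) := by
  unfold Vsum
  exact Finset.measurable_sum _ fun k _ => measurable_Y R k

lemma abs_Vsum_le (R : RW Ω) (i n : ℕ) (ω : Ω) : |Vsum R i n ω| ≤ n := by
  unfold Vsum
  calc |∑ k ∈ Finset.Ico i (i+n), (R.X k ω : ℝ)| ≤ ∑ k ∈ Finset.Ico i (i+n), |(R.X k ω : ℝ)| :=
        Finset.abs_sum_le_sum_abs _ _
    _ = ∑ k ∈ Finset.Ico i (i+n), 1 := by
        exact Finset.sum_congr rfl fun k _ => abs_Y R k ω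
    _ = n := by simp

lemma integrable_of_bdd (R : RW Ω) {g : Ω → ℝ} (C : ℝ) (hm : Measurable g)
    (hb : ∀ ω, |g ω| ≤ C) : Integrable g R.P := by
  haveI := R.prob
  exact (integrable_const C).mono' hm.aestronglyMeasurable (ae_of_all _ hb)

lemma Vsum_eq (R : RW Ω) (i n : ℕ) (ω : Ω) :
    Vsum R i n ω = ((R.S (i+n) ω : ℝ)) - ((R.S i ω : ℝ)) := by
  unfold Vsum RW.S
  push_cast
  rw [← Finset.sum_Ico_eq_sub (fun k => (R.X k ω : ℝ)) (Nat.le_add_right i n)]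

lemma integral_Y_pow (R : RW Ω) (k m : ℕ) :
    ∫ ω, ((R.X k ω : ℝ)) ^ m ∂(R.P) = if Even m then 1 else 0 := by
  haveI := R.prob
  by_cases he : Even m
  · have : ∀ ω, ((R.X k ω : ℝ)) ^ m = 1 := by
      intro ω
      rcases R.vals k ω with h | h <;> rw [h]
      · norm_num
      · push_cast
        exact he.neg_one_pow
    rw [if_pos he]
    calc ∫ ω, ((R.X k ω : ℝ)) ^ m ∂(R.P) = ∫ _ω, (1:ℝ) ∂(R.P) := by
          exact integral_congr_ae (ae_of_all _ this)
      _ = 1 := by simp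
  · have hodd : Odd m := Nat.odd_iff.mpr (Nat.not_even_iff.mp he)
    have hYm : ∀ ω, ((R.X k ω : ℝ)) ^ m = (R.X k ω : ℝ) := by
      intro ω
      rcases R.vals k ω with h | h <;> rw [h]
      · norm_num
      · push_cast
        rw [hodd.neg_one_pow]
    rw [if_neg he]
    rw [integral_congr_ae (ae_of_all _ hYm)]
    -- show expectation of a fair ±1 variable is 0
    set A : Set Ω := R.X k ⁻¹' {1} with hA
    have hAm : MeasurableSet A := R.meas k (measurableSet_singleton 1)
    have hint : Integrable (fun ω => (R.X k ω : ℝ)) R.P :=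
      integrable_of_bdd R 1 (measurable_Y R k) (fun ω => (abs_Y R k ω).le)
    have hPA : R.P A = 1/2 := by
      rw [hA]
      have : R.X k ⁻¹' {1} = {ω | R.X k ω = 1} := by ext ω; simp
      rw [this]; exact R.fair k
    have hPAc : R.P Aᶜ = 1/2 := by
      rw [measure_compl hAm (measure_ne_top _ _), measure_univ, hPA]
      rw [one_div, ENNReal.one_sub_inv_two]
    rw [← integral_add_compl hAm hint]
    have e1 : ∫ ω in A, ((R.X k ω : ℝ)) ∂(R.P) = (R.P A).toReal := by
      rw [setIntegral_congr_fun hAm (g := fun _ => (1:ℝ))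
        (fun ω hω => by simp only [hA, Set.mem_preimage, Set.mem_singleton_iff] at hω; rw [hω]; norm_num)]
      simp [measureReal_def]
    have e2 : ∫ ω in Aᶜ, ((R.X k ω : ℝ)) ∂(R.P) = -(R.P Aᶜ).toReal := by
      rw [setIntegral_congr_fun hAm.compl (g := fun _ => (-1:ℝ))
        (fun ω hω => by
          simp only [hA, Set.mem_compl_iff, Set.mem_preimage, Set.mem_singleton_iff] at hω
          rcases R.vals k ω with h | h
          · exact absurd h hω
          · rw [h]; norm_num)]
      simp [measureReal_def]
    rw [e1, e2, hPA, hPAc]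
    ring

lemma indepFun_Vsum_Y (R : RW Ω) (i n : ℕ) :
    IndepFun (Vsum R i n) (fun ω => (R.X (i+n) ω : ℝ)) R.P := by
  have hcomp : iIndepFun (fun k ω => (R.X k ω : ℝ)) R.P :=
    R.indep.comp (g := fun _ : ℕ => (Int.cast : ℤ → ℝ)) fun _ => measurable_from_top
  have h := hcomp.indepFun_finsetSum_of_notMem (fun k => measurable_Y R k)
    (s := Finset.Ico i (i+n)) (i := i + n) (by simp)
  have : (∑ j ∈ Finset.Ico i (i+n), fun ω => (R.X j ω : ℝ)) = Vsum R i n := by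
    funext ω
    rw [Finset.sum_apply]
    rfl
  rwa [this] at h


lemma moment (R : RW Ω) : ∀ n i q : ℕ, ∫ ω, (Vsum R i n ω)^(2*q) ∂(R.P) ≤ 4^(q*q) * (n:ℝ)^q := by
  haveI := R.prob
  intro n
  induction n with
  | zero =>
    intro i q
    have h0 : ∀ ω : Ω, Vsum R i 0 ω = 0 := by intro ω; unfold Vsum; simp
    rcases Nat.eq_zero_or_pos q with hq | hq
    · subst hq; simp
    · have hz : ∀ ω : Ω, (Vsum R i 0 ω)^(2*q) = 0 := by
        intro ω; rw [h0 ω]; exact zero_pow (by omega)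
      rw [integral_congr_ae (ae_of_all _ hz), integral_zero]
      rw [Nat.cast_zero, zero_pow hq.ne', mul_zero]
  | succ n ih =>
    intro i q
    have hsplit : ∀ ω : Ω, Vsum R i (n+1) ω = Vsum R i n ω + (R.X (i+n) ω : ℝ) := by
      intro ω; unfold Vsum
      rw [show i + (n+1) = (i+n) + 1 from rfl, Finset.sum_Ico_succ_top (Nat.le_add_right i n)]
    have hexp : ∀ ω : Ω, (Vsum R i (n+1) ω)^(2*q)
        = ∑ k ∈ Finset.range (2*q+1),
            Vsum R i n ω ^ k * (R.X (i+n) ω:ℝ) ^ (2*q-k) * (Nat.choose (2*q) k : ℝ) := by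
      intro ω; rw [hsplit ω]; exact add_pow _ _ _
    rw [integral_congr_ae (ae_of_all _ hexp)]
    have hintk : ∀ k m : ℕ, Integrable
        (fun ω => Vsum R i n ω ^ k * (R.X (i+n) ω:ℝ) ^ m * (Nat.choose (2*q) k : ℝ)) R.P := by
      intro k m
      apply integrable_of_bdd R ((n:ℝ)^k * 1 * (Nat.choose (2*q) k : ℝ))
      · exact (((measurable_Vsum R i n).pow_const k).mul
          ((measurable_Y R (i+n)).pow_const m)).mul_const _
      · intro ω
        rw [abs_mul, abs_mul, abs_pow, abs_pow, abs_Y, one_pow]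
        have h1 : |Vsum R i n ω|^k ≤ (n:ℝ)^k :=
          pow_le_pow_left₀ (abs_nonneg _) (abs_Vsum_le R i n ω) k
        have h2 : |(Nat.choose (2*q) k : ℝ)| = (Nat.choose (2*q) k : ℝ) :=
          abs_of_nonneg (by positivity)
        rw [h2]
        have h3 : (0:ℝ) ≤ (Nat.choose (2*q) k : ℝ) := by positivity
        nlinarith [abs_nonneg (Vsum R i n ω), pow_nonneg (abs_nonneg (Vsum R i n ω)) k]
    rw [integral_finset_sum _ (fun k _ => hintk k (2*q-k))]
    have heval : ∀ k ∈ Finset.range (2*q+1),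
        (∫ ω, Vsum R i n ω ^ k * (R.X (i+n) ω:ℝ) ^ (2*q-k) * (Nat.choose (2*q) k : ℝ) ∂(R.P))
        = (if Even k then (∫ ω, Vsum R i n ω ^ k ∂(R.P)) * (Nat.choose (2*q) k : ℝ) else 0) := by
      intro k hk
      rw [Finset.mem_range] at hk
      rw [integral_mul_const]
      have hind : IndepFun (fun ω => Vsum R i n ω ^ k)
          (fun ω => (R.X (i+n) ω:ℝ) ^ (2*q-k)) R.P :=
        (indepFun_Vsum_Y R i n).comp (measurable_id.pow_const k) (measurable_id.pow_const (2*q-k))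
      have hprod : (∫ ω, Vsum R i n ω ^ k * (R.X (i+n) ω:ℝ) ^ (2*q-k) ∂(R.P))
          = (∫ ω, Vsum R i n ω ^ k ∂(R.P)) * (∫ ω, (R.X (i+n) ω:ℝ) ^ (2*q-k) ∂(R.P)) := by
        exact hind.integral_fun_mul_eq_mul_integral ((measurable_Vsum R i n).pow_const k).aestronglyMeasurable
          ((measurable_Y R (i+n)).pow_const _).aestronglyMeasurable
      rw [hprod, integral_Y_pow]
      have hpar : Even (2*q - k) ↔ Even k := by
        rw [Nat.even_sub (by omega)]
        simp [Nat.even_mul]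
      by_cases he : Even k
      · rw [if_pos (hpar.mpr he), if_pos he, mul_one]
      · rw [if_neg (fun h => he (hpar.mp h)), if_neg he, mul_zero, zero_mul]
    rw [Finset.sum_congr rfl heval]
    have hvan : ∀ k, ¬ Even k →
        (if Even k then (∫ ω, Vsum R i n ω ^ k ∂(R.P)) * (Nat.choose (2*q) k : ℝ) else 0) = 0 := by
      intro k hk; rw [if_neg hk]
    rw [sum_even_range _ hvan q]
    have hterm : ∀ j ∈ Finset.range (q+1),
        (if Even (2*j) then (∫ ω, Vsum R i n ω ^ (2*j) ∂(R.P)) * (Nat.choose (2*q) (2*j) : ℝ) else 0)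
        ≤ (4:ℝ)^(j*j) * (n:ℝ)^j * (Nat.choose (2*q) (2*j) : ℝ) := by
      intro j hj
      rw [if_pos (even_two_mul j)]
      exact mul_le_mul_of_nonneg_right (ih i j) (by positivity)
    calc ∑ j ∈ Finset.range (q+1),
          (if Even (2*j) then (∫ ω, Vsum R i n ω ^ (2*j) ∂(R.P)) * (Nat.choose (2*q) (2*j) : ℝ) else 0)
        ≤ ∑ j ∈ Finset.range (q+1), (4:ℝ)^(j*j) * (n:ℝ)^j * (Nat.choose (2*q) (2*j) : ℝ) :=
          Finset.sum_le_sum hterm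
      _ ≤ 4^(q*q) * ((n:ℝ)+1)^q := by
          rw [Finset.sum_range_succ]
          have hlast : (4:ℝ)^(q*q) * (n:ℝ)^q * (Nat.choose (2*q) (2*q) : ℝ)
              = 4^(q*q) * (n:ℝ)^q := by rw [Nat.choose_self]; norm_num
          rw [hlast]
          have hsmall : ∀ j ∈ Finset.range q,
              (4:ℝ)^(j*j) * (n:ℝ)^j * (Nat.choose (2*q) (2*j) : ℝ)
              ≤ (4:ℝ)^(q*q) * (n:ℝ)^j := by
            intro j hj
            rw [Finset.mem_range] at hj
            have hch : (Nat.choose (2*q) (2*j) : ℝ) ≤ (4:ℝ)^q := by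
              have h1 : Nat.choose (2*q) (2*j) ≤ ∑ m ∈ Finset.range (2*q+1), Nat.choose (2*q) m :=
                Finset.single_le_sum (f := fun m => Nat.choose (2*q) m)
                  (fun m _ => Nat.zero_le _) (Finset.mem_range.mpr (by omega))
              rw [Nat.sum_range_choose] at h1
              calc (Nat.choose (2*q) (2*j) : ℝ) ≤ ((2:ℕ):ℝ)^(2*q) := by exact_mod_cast h1
                _ = 4^q := by rw [pow_mul]; norm_num
            have hexp2 : (4:ℝ)^(j*j) * (4:ℝ)^q ≤ (4:ℝ)^(q*q) := by
              rw [← pow_add]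
              apply pow_le_pow_right₀ (by norm_num)
              nlinarith
            have hnn : (0:ℝ) ≤ (n:ℝ)^j := by positivity
            have h4nn : (0:ℝ) ≤ (4:ℝ)^(j*j) := by positivity
            calc (4:ℝ)^(j*j) * (n:ℝ)^j * (Nat.choose (2*q) (2*j) : ℝ)
                = ((4:ℝ)^(j*j) * (Nat.choose (2*q) (2*j) : ℝ)) * (n:ℝ)^j := by ring
              _ ≤ ((4:ℝ)^(j*j) * (4:ℝ)^q) * (n:ℝ)^j := by
                  exact mul_le_mul_of_nonneg_right
                    (mul_le_mul_of_nonneg_left hch h4nn) hnn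
              _ ≤ (4:ℝ)^(q*q) * (n:ℝ)^j := mul_le_mul_of_nonneg_right hexp2 hnn
          have hbinq : ((n:ℝ)+1)^q = ∑ j ∈ Finset.range (q+1),
              (n:ℝ)^j * 1^(q-j) * (Nat.choose q j : ℝ) := add_pow _ _ _
          have hge : ∑ j ∈ Finset.range q, (n:ℝ)^j + (n:ℝ)^q ≤ ((n:ℝ)+1)^q := by
            rw [hbinq, Finset.sum_range_succ]
            have h1 : ∀ j ∈ Finset.range q, (n:ℝ)^j ≤ (n:ℝ)^j * 1^(q-j) * (Nat.choose q j : ℝ) := by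
              intro j hj
              rw [Finset.mem_range] at hj
              rw [one_pow, mul_one]
              have : (1:ℝ) ≤ (Nat.choose q j : ℝ) := by
                exact_mod_cast Nat.one_le_iff_ne_zero.mpr (Nat.choose_pos hj.le).ne'
              nlinarith [pow_nonneg (Nat.cast_nonneg n : (0:ℝ) ≤ n) j]
            have h2 : (n:ℝ)^q ≤ (n:ℝ)^q * 1^(q-q) * (Nat.choose q q : ℝ) := by
              rw [Nat.choose_self, one_pow]; norm_num
            have := Finset.sum_le_sum h1
            linarith
          calc ∑ j ∈ Finset.range q, (4:ℝ)^(j*j) * (n:ℝ)^j * (Nat.choose (2*q) (2*j) : ℝ)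
              + 4^(q*q) * (n:ℝ)^q
              ≤ ∑ j ∈ Finset.range q, (4:ℝ)^(q*q) * (n:ℝ)^j + 4^(q*q) * (n:ℝ)^q := by
                have := Finset.sum_le_sum hsmall
                linarith
            _ = 4^(q*q) * (∑ j ∈ Finset.range q, (n:ℝ)^j + (n:ℝ)^q) := by
                rw [← Finset.mul_sum]; ring
            _ ≤ 4^(q*q) * ((n:ℝ)+1)^q := by
                apply mul_le_mul_of_nonneg_left hge (by positivity)
      _ = 4^(q*q) * ((n+1:ℕ):ℝ)^q := by push_cast; ring

lemma markov (R : RW Ω) (i n q : ℕ) {a : ℝ} (ha : 0 < a) :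
    R.P {ω | a ≤ |Vsum R i n ω|} ≤ ENNReal.ofReal ((4:ℝ)^(q*q) * (n:ℝ)^q / a^(2*q)) := by
  haveI := R.prob
  set g := fun ω => (Vsum R i n ω)^(2*q) with hg
  have hgnn : ∀ ω, 0 ≤ g ω := fun ω => (even_two_mul q).pow_nonneg _
  have hsub : {ω | a ≤ |Vsum R i n ω|} ⊆ {ω | a^(2*q) ≤ g ω} := by
    intro ω hω
    simp only [Set.mem_setOf_eq] at hω ⊢
    calc a^(2*q) ≤ |Vsum R i n ω|^(2*q) := pow_le_pow_left₀ ha.le hω _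
      _ = g ω := by rw [pow_abs, abs_of_nonneg (hgnn ω)]
  have hint : Integrable g R.P := by
    apply integrable_of_bdd R ((n:ℝ)^(2*q)) ((measurable_Vsum R i n).pow_const _)
    intro ω
    rw [← pow_abs]
    exact pow_le_pow_left₀ (abs_nonneg _) (abs_Vsum_le R i n ω) _
  have hm := mul_meas_ge_le_integral_of_nonneg (μ := R.P) (ae_of_all _ hgnn) hint (a^(2*q))
  have hmom := moment R n i q
  have hpow : 0 < a^(2*q) := pow_pos ha _
  have h2 : (R.P {ω | a^(2*q) ≤ g ω}).toReal ≤ 4^(q*q) * (n:ℝ)^q / a^(2*q) := by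
    rw [le_div_iff₀ hpow]
    calc (R.P {ω | a^(2*q) ≤ g ω}).toReal * a^(2*q)
        = a^(2*q) * (R.P {ω | a^(2*q) ≤ g ω}).toReal := mul_comm _ _
      _ ≤ ∫ ω, g ω ∂(R.P) := hm
      _ ≤ 4^(q*q) * (n:ℝ)^q := hmom
  calc R.P {ω | a ≤ |Vsum R i n ω|} ≤ R.P {ω | a^(2*q) ≤ g ω} := measure_mono hsub
    _ ≤ ENNReal.ofReal ((4:ℝ)^(q*q) * (n:ℝ)^q / a^(2*q)) := by
        rw [← ENNReal.ofReal_toReal (measure_ne_top R.P {ω | a^(2*q) ≤ g ω})]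
        exact ENNReal.ofReal_le_ofReal h2


set_option maxHeartbeats 1000000

/-- technical power identity for the geometric reindexing -/
lemma pow_tech (u q' : ℕ) :
    (((4/3:ℝ))^u)^(2*(q'+1)) = (2:ℝ)^(u*q') * 2^u * ((8/9:ℝ)^(q'+1))^u := by
  calc (((4/3:ℝ))^u)^(2*(q'+1)) = ((16/9:ℝ))^(u*(q'+1)) := by
        rw [← pow_mul, show u*(2*(q'+1)) = 2*(u*(q'+1)) by ring, pow_mul]
        norm_num
    _ = (2:ℝ)^(u*q') * 2^u * ((8/9:ℝ)^(q'+1))^u := by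
        rw [show (16/9:ℝ) = 2*(8/9) by norm_num, mul_pow,
          show (8/9:ℝ)^(u*(q'+1)) = ((8/9:ℝ)^(q'+1))^u by rw [← pow_mul, mul_comm],
          show u*(q'+1) = u*q' + u by ring, pow_add]

/-- the per-level term identity -/
lemma level_eq (Nr Apos δ : ℝ) (hA : Apos ≠ 0) (hδ : δ ≠ 0) (q' p u : ℕ) :
    Nr/2^p * ((4:ℝ)^((q'+1)*(q'+1)) * (2:ℝ)^(p*(q'+1)) *
        (δ/(Apos * (3/4:ℝ)^u))^(2*(q'+1)))
      = (Nr * 4^((q'+1)*(q'+1)) * (δ/Apos)^(2*(q'+1)) * 2^((p+u)*q'))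
          * (2*(8/9:ℝ)^(q'+1))^u := by
  have h43 : ((3/4:ℝ))^u = (((4/3:ℝ))^u)⁻¹ := by
    rw [← inv_pow]; norm_num
  have e1 : δ/(Apos * (3/4:ℝ)^u) = (δ/Apos) * (4/3:ℝ)^u := by
    rw [h43, div_eq_mul_inv, mul_inv, inv_inv, div_eq_mul_inv]; ring
  rw [e1, mul_pow, pow_tech u q', mul_pow 2 ((8/9:ℝ)^(q'+1)) u,
    show p*(q'+1) = p*q' + p by ring, pow_add,
    show (p+u)*q' = p*q' + u*q' by ring, pow_add]
  have h2p : ((2:ℝ))^p ≠ 0 := by positivity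
  field_simp
  ring


/-- **Modulus-of-continuity estimate.** For `α, β ∈ (0,∞)` with `β/2 > α` and any
`r ≥ 0` there is `c ∈ (0,∞)`, independent of `Δ` and `δ`, such that
`P(ω_{S̃}(Δ^β) ≥ Δ^α/2) ≤ c·Δ^r` for a simple symmetric random walk `S`. -/
theorem exceptional_times_thm7 (R : RW Ω) (α β : ℝ) (hα : 0 < α) (hβ : 0 < β)
    (hαβ : α < β / 2) (r : ℝ) (hr : 0 ≤ r) :
    ∃ c : ℝ, 0 < c ∧ ∀ δ : ℝ, δ ∈ Set.Ioc (0 : ℝ) 1 → ∀ Δ : ℝ, 0 < Δ →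
      (R.P {ω | Δ ^ α / 2 ≤ modulus (rescale δ (R.path ω)) (Δ ^ β)}).toReal ≤
        c * Δ ^ r := by
  haveI := R.prob
  have hβ2α : 0 < β - 2*α := by linarith
  obtain ⟨q', hq12, hqr⟩ : ∃ q' : ℕ, 12 ≤ q' + 1 ∧
      r + β ≤ ((q' + 1 : ℕ):ℝ) * (β - 2*α) := by
    refine ⟨max 12 (⌈(r + β) / (β - 2*α)⌉₊ + 1) - 1, by omega, ?_⟩
    have hmax : max 12 (⌈(r + β) / (β - 2*α)⌉₊ + 1) - 1 + 1
        = max 12 (⌈(r + β) / (β - 2*α)⌉₊ + 1) := by omega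
    rw [hmax]
    have h1 : (r + β) / (β - 2*α) ≤ (⌈(r + β) / (β - 2*α)⌉₊ : ℝ) := Nat.le_ceil _
    have h2 : (⌈(r + β) / (β - 2*α)⌉₊ + 1 : ℕ) ≤ max 12 (⌈(r + β) / (β - 2*α)⌉₊ + 1) :=
      le_max_right _ _
    have h3 : ((⌈(r + β) / (β - 2*α)⌉₊ : ℝ) + 1)
        ≤ ((max 12 (⌈(r + β) / (β - 2*α)⌉₊ + 1) : ℕ) : ℝ) := by exact_mod_cast h2
    rw [div_le_iff₀ hβ2α] at h1
    nlinarith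
  set q : ℕ := q' + 1 with hq'
  have hq1 : 1 ≤ q := by omega
  set c : ℝ := 4^(q*q) * 32^(2*q) * 26^q' * 4 + 1 with hc
  have hcnn : (0:ℝ) ≤ 4^(q*q) * 32^(2*q) * 26^q' * 4 := by positivity
  have hc1 : 1 ≤ c := by rw [hc]; linarith
  refine ⟨c, by linarith, ?_⟩
  intro δ hδ Δ hΔ
  obtain ⟨hδ0, hδ1⟩ := hδ
  have hΔα : 0 < Δ^α := Real.rpow_pos_of_pos hΔ _
  have hΔβ : 0 < Δ^β := Real.rpow_pos_of_pos hΔ _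
  have hΔr : 0 < Δ^r := Real.rpow_pos_of_pos hΔ _
  by_cases hΔ1 : 1 ≤ Δ
  · -- trivial regime Δ ≥ 1
    have h1 : (R.P {ω | Δ ^ α / 2 ≤ modulus (rescale δ (R.path ω)) (Δ ^ β)}).toReal ≤ 1 := by
      calc (R.P _).toReal ≤ (1:ℝ≥0∞).toReal :=
            ENNReal.toReal_mono (by norm_num) prob_le_one
        _ = 1 := by norm_num
    have h2 : 1 ≤ Δ^r := Real.one_le_rpow hΔ1 hr
    have h3 : 1 * Δ^r ≤ c * Δ^r := mul_le_mul_of_nonneg_right hc1 hΔr.le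
    calc (R.P {ω | Δ ^ α / 2 ≤ modulus (rescale δ (R.path ω)) (Δ ^ β)}).toReal
        ≤ 1 := h1
      _ ≤ Δ^r := h2
      _ = 1 * Δ^r := (one_mul _).symm
      _ ≤ c * Δ^r := h3
  push_neg at hΔ1
  have hstep : ∀ (ω : Ω) (n : ℕ), |((R.S (n+1) ω : ℤ) : ℝ) - ((R.S n ω : ℤ) : ℝ)| ≤ 1 := by
    intro ω n
    have h1 : R.S (n+1) ω = R.S n ω + R.X n ω := by
      unfold RW.S; rw [Finset.sum_range_succ]
    rw [h1]
    push_cast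
    rw [add_sub_cancel_left]
    exact (abs_Y R n ω).le
  have hδ2pos : (0:ℝ) < δ^2 := by positivity
  by_cases hcase : 2 * Δ^(β-α) < δ
  · -- Lipschitz case: the event is empty
    have hemp : {ω | Δ ^ α / 2 ≤ modulus (rescale δ (R.path ω)) (Δ ^ β)} = (∅ : Set Ω) := by
      · rw [Set.eq_empty_iff_forall_notMem]
        intro ω hω
        simp only [Set.mem_setOf_eq] at hω
        have hmod : modulus (rescale δ (R.path ω)) (Δ ^ β) ≤ Δ^β / δ := by
          apply Real.sSup_le _ (by positivity)
          rintro d ⟨s, hs, t, ht, hst, rfl⟩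
          have hs0 : 0 ≤ s := hs.1
          have ht0 : 0 ≤ t := ht.1
          have h1 : |rescale δ (R.path ω) t - rescale δ (R.path ω) s|
              = δ * |interp (fun n => R.S n ω) (t/δ^2) - interp (fun n => R.S n ω) (s/δ^2)| := by
            unfold rescale RW.path
            rw [← mul_sub, abs_mul, abs_of_pos hδ0]
          rw [h1]
          have hkey : |interp (fun n => R.S n ω) (t/δ^2) - interp (fun n => R.S n ω) (s/δ^2)|
              ≤ |t - s| / δ^2 := by
            rcases le_total (s/δ^2) (t/δ^2) with hle | hle
            · calc |interp (fun n => R.S n ω) (t/δ^2) - interp (fun n => R.S n ω) (s/δ^2)|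
                  ≤ t/δ^2 - s/δ^2 :=
                    interp_lip (fun n => R.S n ω) (hstep ω) (div_nonneg hs0 hδ2pos.le) hle
                _ = (t - s)/δ^2 := by ring
                _ ≤ |t - s|/δ^2 := (div_le_div_iff_of_pos_right hδ2pos).mpr (le_abs_self _)
            · rw [abs_sub_comm]
              calc |interp (fun n => R.S n ω) (s/δ^2) - interp (fun n => R.S n ω) (t/δ^2)|
                  ≤ s/δ^2 - t/δ^2 :=
                    interp_lip (fun n => R.S n ω) (hstep ω) (div_nonneg ht0 hδ2pos.le) hle
                _ = (s - t)/δ^2 := by ring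
                _ ≤ |t - s|/δ^2 :=
                    (div_le_div_iff_of_pos_right hδ2pos).mpr ((le_abs_self _).trans (abs_sub_comm s t).le)
          calc δ * |interp (fun n => R.S n ω) (t/δ^2) - interp (fun n => R.S n ω) (s/δ^2)|
              ≤ δ * (|t - s|/δ^2) := mul_le_mul_of_nonneg_left hkey hδ0.le
            _ ≤ δ * (Δ^β/δ^2) := by
                apply mul_le_mul_of_nonneg_left _ hδ0.le
                rw [abs_sub_comm t s]
                exact (div_le_div_iff_of_pos_right hδ2pos).mpr hst.le
            _ = Δ^β/δ := by
                field_simp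
        have hlt : Δ^β/δ < Δ^α/2 := by
          rw [div_lt_div_iff₀ hδ0 two_pos]
          have he : Δ^(β-α) * Δ^α = Δ^β := by
            rw [← Real.rpow_add hΔ]; ring_nf
          nlinarith
        linarith
    rw [hemp, measure_empty]
    simp only [ENNReal.toReal_zero]
    positivity
  push_neg at hcase
  -- MAIN CASE : δ ≤ 2 Δ^(β-α)
  have hδ2 : δ^2 ≤ 4 * Δ^β := by
    have hba : 0 < Δ^(β-α) := Real.rpow_pos_of_pos hΔ _
    have h1 : δ^2 ≤ (2*Δ^(β-α))^2 := by nlinarith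
    have h3 : Δ^(β-α)*Δ^(β-α) = Δ^β * Δ^(β-2*α) := by
      rw [← Real.rpow_add hΔ, ← Real.rpow_add hΔ]; ring_nf
    have h4 : Δ^(β-2*α) ≤ 1 := Real.rpow_le_one hΔ.le hΔ1.le (by linarith)
    nlinarith
  set N : ℕ := ⌊1/δ^2⌋₊ + 1 with hN
  set m' : ℕ := ⌊Δ^β/δ^2⌋₊ + 3 with hm'
  set P' : ℕ := sInf {p : ℕ | m' ≤ 2^p} with hP'
  have hP'ne : {p : ℕ | m' ≤ 2^p}.Nonempty := ⟨m', (Nat.lt_two_pow_self (n := m')).le⟩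
  have hP'mem : m' ≤ 2^P' := Nat.sInf_mem hP'ne
  have hP'pos : 1 ≤ P' := by
    by_contra h
    push_neg at h
    have h0 : P' = 0 := by omega
    rw [h0, pow_zero] at hP'mem
    omega
  have hP'min : 2^(P'-1) < m' := by
    by_contra h
    push_neg at h
    have : P' ≤ P' - 1 := Nat.sInf_le h
    omega
  have hNr : (N:ℝ) ≤ 2/δ^2 := by
    have h1 : (⌊1/δ^2⌋₊ : ℝ) ≤ 1/δ^2 := Nat.floor_le (by positivity)
    have h2 : (1:ℝ) ≤ 1/δ^2 := by
      rw [le_div_iff₀ hδ2pos]; nlinarith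
    rw [hN]; push_cast
    have h3 : (2:ℝ)/δ^2 = 1/δ^2 + 1/δ^2 := by ring
    rw [h3]; linarith
  have hm'r : (m' : ℝ) ≤ 13 * (Δ^β/δ^2) := by
    have h1 : (⌊Δ^β/δ^2⌋₊ : ℝ) ≤ Δ^β/δ^2 := Nat.floor_le (by positivity)
    have h2 : (3:ℝ) ≤ 12 * (Δ^β/δ^2) := by
      rw [mul_div_assoc', le_div_iff₀ hδ2pos]
      linarith
    rw [hm']; push_cast
    linarith
  have h2P' : ((2:ℝ))^P' ≤ 26 * (Δ^β/δ^2) := by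
    have h1 : ((2:ℝ))^(P'-1) < (m':ℝ) := by exact_mod_cast hP'min
    have h2 : (2:ℝ)^P' = 2 * 2^(P'-1) := by
      rw [← pow_succ']
      congr 1
      omega
    rw [h2]
    nlinarith
  set A : ℝ := Δ^α/32 with hA
  have hApos : 0 < A := by rw [hA]; positivity
  set ath : ℕ → ℝ := fun p => A * (3/4)^(P'-p) with hath
  have hathpos : ∀ p, 0 < ath p := fun p => by rw [hath]; positivity
  set E : ℕ → ℕ → Set Ω := fun p i => {ω | ath p / δ ≤ |Vsum R (i*2^p) (2^p) ω|} with hE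
  set Bad : Set Ω := ⋃ p ∈ Finset.range (P'+1), ⋃ i ∈ Finset.range (N/2^p), E p i with hBad
  -- STEP 1 : inclusion of the modulus event in Bad
  have hincl : {ω | Δ^α/2 ≤ modulus (rescale δ (R.path ω)) (Δ^β)} ⊆ Bad := by
    intro ω hω
    by_contra hnB
    have hgood : ∀ p ≤ P', ∀ i : ℕ, (i+1)*2^p ≤ N →
        |((R.S ((i+1)*2^p) ω : ℤ):ℝ) - ((R.S (i*2^p) ω : ℤ):ℝ)| ≤ ath p / δ := by
      intro p hp i hi
      have h2p : 0 < 2^p := Nat.pow_pos (n := p) (by norm_num)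
      have hiR : i ∈ Finset.range (N/2^p) := by
        rw [Finset.mem_range]
        have := (Nat.le_div_iff_mul_le h2p).mpr hi
        omega
      have hnE : ω ∉ E p i := fun hmem =>
        hnB (Set.mem_biUnion (Finset.mem_range.mpr (by omega) : p ∈ Finset.range (P'+1))
          (Set.mem_biUnion hiR hmem))
      rw [hE] at hnE
      simp only [Set.mem_setOf_eq, not_le] at hnE
      have hVeq : Vsum R (i*2^p) (2^p) ω
          = ((R.S ((i+1)*2^p) ω : ℤ):ℝ) - ((R.S (i*2^p) ω : ℤ):ℝ) := by
        rw [Vsum_eq]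
        congr 3
        ring
      rw [← hVeq]
      exact hnE.le
    have hchain := chain_bound (fun n => ((R.S n ω : ℤ):ℝ)) (fun p => ath p / δ)
      (fun p => div_nonneg (hathpos p).le hδ0.le) N P' hgood
    have hsum : ∑ p ∈ Finset.range (P'+1), ath p ≤ 4*A := by
      have h1 : ∑ p ∈ Finset.range (P'+1), ath p
          = A * ∑ p ∈ Finset.range (P'+1), (3/4:ℝ)^(P'-p) := by
        rw [hath, Finset.mul_sum]
      have h2 : ∑ p ∈ Finset.range (P'+1), (3/4:ℝ)^(P'-p)
          = ∑ u ∈ Finset.range (P'+1), (3/4:ℝ)^u := by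
        rw [← Finset.sum_range_reflect (fun u => (3/4:ℝ)^u) (P'+1)]
        apply Finset.sum_congr rfl
        intro p hp
        rw [Finset.mem_range] at hp
        congr 1 <;> omega
      have h3 := geom_sum_le_inv (3/4) (by norm_num) (by norm_num) (P'+1)
      have h4 : (1:ℝ)/(1-3/4) = 4 := by norm_num
      rw [h1, h2]
      rw [h4] at h3
      calc A * ∑ u ∈ Finset.range (P'+1), (3/4:ℝ)^u ≤ A * 4 :=
            mul_le_mul_of_nonneg_left h3 hApos.le
        _ = 4*A := by ring
    have hmod : modulus (rescale δ (R.path ω)) (Δ^β) ≤ Δ^α/4 := by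
      apply Real.sSup_le _ (by positivity)
      rintro d ⟨s, hs, t, ht, hst, rfl⟩
      have hs0 : 0 ≤ s := hs.1
      have ht0 : 0 ≤ t := ht.1
      have hs'0 : 0 ≤ s/δ^2 := div_nonneg hs0 hδ2pos.le
      have ht'0 : 0 ≤ t/δ^2 := div_nonneg ht0 hδ2pos.le
      have hfloorN : ∀ u : ℝ, 0 ≤ u → u ≤ 1 → ⌊u/δ^2⌋₊ + 1 ≤ N := by
        intro u hu hu1
        have h1 : u/δ^2 ≤ 1/δ^2 := by
          exact div_le_div_of_nonneg_right hu1 hδ2pos.le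
        have := Nat.floor_le_floor h1
        omega
      have habs : |t/δ^2 - s/δ^2| < Δ^β/δ^2 := by
        rw [div_sub_div_same, abs_div, abs_of_pos hδ2pos]
        exact (div_lt_div_iff_of_pos_right hδ2pos).mpr (by rw [abs_sub_comm]; exact hst)
      have hflt : ⌊t/δ^2⌋₊ ≤ ⌊s/δ^2⌋₊ + (⌊Δ^β/δ^2⌋₊ + 1) ∧
          ⌊s/δ^2⌋₊ ≤ ⌊t/δ^2⌋₊ + (⌊Δ^β/δ^2⌋₊ + 1) := by
        have hb1 : (⌊t/δ^2⌋₊:ℝ) ≤ t/δ^2 := Nat.floor_le ht'0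
        have hb2 : (⌊s/δ^2⌋₊:ℝ) ≤ s/δ^2 := Nat.floor_le hs'0
        have hb3 : t/δ^2 < ⌊t/δ^2⌋₊ + 1 := Nat.lt_floor_add_one _
        have hb4 : s/δ^2 < ⌊s/δ^2⌋₊ + 1 := Nat.lt_floor_add_one _
        have hb5 : Δ^β/δ^2 < ⌊Δ^β/δ^2⌋₊ + 1 := Nat.lt_floor_add_one _
        rw [abs_lt] at habs
        constructor
        · have hcast : (⌊t/δ^2⌋₊:ℝ) < ((⌊s/δ^2⌋₊ + ⌊Δ^β/δ^2⌋₊ + 2 : ℕ) : ℝ) := by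
            push_cast; linarith
          have := Nat.cast_lt.mp hcast
          omega
        · have hcast : (⌊s/δ^2⌋₊:ℝ) < ((⌊t/δ^2⌋₊ + ⌊Δ^β/δ^2⌋₊ + 2 : ℕ) : ℝ) := by
            push_cast; linarith
          have := Nat.cast_lt.mp hcast
          omega
      have hcorner : ∀ j k : ℕ, (j = ⌊(s/δ^2)⌋₊ ∨ j = ⌊(s/δ^2)⌋₊ + 1) →
          (k = ⌊(t/δ^2)⌋₊ ∨ k = ⌊(t/δ^2)⌋₊ + 1) →
          |((R.S k ω : ℤ):ℝ) - ((R.S j ω : ℤ):ℝ)|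
            ≤ 2 * ∑ p ∈ Finset.range (P'+1), (ath p / δ) := by
        intro j k hj hk
        have hjN : j ≤ N := by
          have := hfloorN s hs0 hs.2
          omega
        have hkN : k ≤ N := by
          have := hfloorN t ht0 ht.2
          omega
        have hdiff : k - j ≤ 2^P' ∧ j - k ≤ 2^P' := by
          have h1 := hflt.1
          have h2 := hflt.2
          have h3 : ⌊Δ^β/δ^2⌋₊ + 3 ≤ 2^P' := hP'mem
          omega
        rcases le_total j k with hle | hle
        · exact hchain j k hle hkN hdiff.1
        · rw [abs_sub_comm]
          exact hchain k j hle hjN hdiff.2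
      have h1 : |rescale δ (R.path ω) t - rescale δ (R.path ω) s|
          = δ * |interp (fun n => R.S n ω) (t/δ^2) - interp (fun n => R.S n ω) (s/δ^2)| := by
        unfold rescale RW.path
        rw [← mul_sub, abs_mul, abs_of_pos hδ0]
      rw [h1]
      have hB := interp_diff_le (fun n => R.S n ω) hs'0 ht'0 hcorner
      have hsum2 : ∑ p ∈ Finset.range (P'+1), (ath p / δ)
          = (∑ p ∈ Finset.range (P'+1), ath p) / δ := by
        rw [Finset.sum_div]
      calc δ * |interp (fun n => R.S n ω) (t/δ^2) - interp (fun n => R.S n ω) (s/δ^2)|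
          ≤ δ * (2 * ∑ p ∈ Finset.range (P'+1), (ath p / δ)) :=
            mul_le_mul_of_nonneg_left hB hδ0.le
        _ = 2 * ∑ p ∈ Finset.range (P'+1), ath p := by
            rw [hsum2]; field_simp
        _ ≤ 2 * (4*A) := by linarith
        _ = Δ^α/4 := by rw [hA]; ring
    simp only [Set.mem_setOf_eq] at hω
    linarith
  -- STEP 2 : union bound and Markov
  have hT : (R.P {ω | Δ^α/2 ≤ modulus (rescale δ (R.path ω)) (Δ^β)}).toReal
      ≤ ∑ p ∈ Finset.range (P'+1),
          ((N/2^p : ℕ):ℝ) * ((4:ℝ)^(q*q) * (((2:ℕ)^p : ℕ):ℝ)^q / (ath p/δ)^(2*q)) := by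
    have hmark : ∀ p i : ℕ, R.P (E p i)
        ≤ ENNReal.ofReal ((4:ℝ)^(q*q) * (((2:ℕ)^p : ℕ):ℝ)^q / (ath p/δ)^(2*q)) := by
      intro p i
      exact markov R (i*2^p) (2^p) q (div_pos (hathpos p) hδ0)
    have hbnn : ∀ p : ℕ, (0:ℝ) ≤ (4:ℝ)^(q*q) * (((2:ℕ)^p : ℕ):ℝ)^q / (ath p/δ)^(2*q) := by
      intro p
      have := hathpos p
      positivity
    have hPB : R.P Bad ≤ ENNReal.ofReal (∑ p ∈ Finset.range (P'+1),
        ((N/2^p : ℕ):ℝ) * ((4:ℝ)^(q*q) * (((2:ℕ)^p : ℕ):ℝ)^q / (ath p/δ)^(2*q))) := by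
      calc R.P Bad
          ≤ ∑ p ∈ Finset.range (P'+1), R.P (⋃ i ∈ Finset.range (N/2^p), E p i) :=
            measure_biUnion_finset_le _ _
        _ ≤ ∑ p ∈ Finset.range (P'+1),
              ENNReal.ofReal (((N/2^p : ℕ):ℝ) *
                ((4:ℝ)^(q*q) * (((2:ℕ)^p : ℕ):ℝ)^q / (ath p/δ)^(2*q))) := by
            apply Finset.sum_le_sum
            intro p _
            calc R.P (⋃ i ∈ Finset.range (N/2^p), E p i)
                ≤ ∑ i ∈ Finset.range (N/2^p), R.P (E p i) := measure_biUnion_finset_le _ _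
              _ ≤ ∑ _i ∈ Finset.range (N/2^p),
                    ENNReal.ofReal ((4:ℝ)^(q*q) * (((2:ℕ)^p : ℕ):ℝ)^q / (ath p/δ)^(2*q)) :=
                  Finset.sum_le_sum fun i _ => hmark p i
              _ = (N/2^p : ℕ) •
                    ENNReal.ofReal ((4:ℝ)^(q*q) * (((2:ℕ)^p : ℕ):ℝ)^q / (ath p/δ)^(2*q)) := by
                  rw [Finset.sum_const, Finset.card_range]
              _ = ENNReal.ofReal (((N/2^p : ℕ):ℝ) *
                    ((4:ℝ)^(q*q) * (((2:ℕ)^p : ℕ):ℝ)^q / (ath p/δ)^(2*q))) := by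
                  rw [nsmul_eq_mul, ← ENNReal.ofReal_natCast (N/2^p),
                    ← ENNReal.ofReal_mul (by positivity)]
        _ = ENNReal.ofReal (∑ p ∈ Finset.range (P'+1),
              ((N/2^p : ℕ):ℝ) * ((4:ℝ)^(q*q) * (((2:ℕ)^p : ℕ):ℝ)^q / (ath p/δ)^(2*q))) := by
            rw [ENNReal.ofReal_sum_of_nonneg]
            intro p _
            exact mul_nonneg (Nat.cast_nonneg _) (hbnn p)
    calc (R.P {ω | Δ^α/2 ≤ modulus (rescale δ (R.path ω)) (Δ^β)}).toReal
        ≤ (R.P Bad).toReal :=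
          ENNReal.toReal_mono (measure_ne_top _ _) (measure_mono hincl)
      _ ≤ (ENNReal.ofReal (∑ p ∈ Finset.range (P'+1),
            ((N/2^p : ℕ):ℝ) * ((4:ℝ)^(q*q) * (((2:ℕ)^p : ℕ):ℝ)^q / (ath p/δ)^(2*q)))).toReal :=
          ENNReal.toReal_mono ENNReal.ofReal_ne_top hPB
      _ ≤ _ := le_of_eq (ENNReal.toReal_ofReal (Finset.sum_nonneg fun p _ =>
          mul_nonneg (Nat.cast_nonneg _) (hbnn p)))
  -- STEP 3 : numeric bound on the sum
  set ρ : ℝ := 2*(8/9:ℝ)^q with hρ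
  have hρpos : 0 < ρ := by rw [hρ]; positivity
  have hρhalf : ρ ≤ 1/2 := by
    rw [hρ]
    have h1 : (8/9:ℝ)^q ≤ (8/9:ℝ)^12 :=
      pow_le_pow_of_le_one (by norm_num) (by norm_num) (by omega)
    have h2 : (8/9:ℝ)^12 ≤ 1/4 := by norm_num
    linarith
  set Cfac : ℝ := (N:ℝ) * 4^(q*q) * (δ/A)^(2*q) * 2^(P'*q') with hCfac
  have hCfacnn : 0 ≤ Cfac := by
    rw [hCfac]
    have := hApos
    positivity
  have hgle : ∀ p ∈ Finset.range (P'+1),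
      ((N/2^p : ℕ):ℝ) * ((4:ℝ)^(q*q) * (((2:ℕ)^p : ℕ):ℝ)^q / (ath p/δ)^(2*q))
        ≤ Cfac * ρ^(P'-p) := by
    intro p hp
    rw [Finset.mem_range] at hp
    have hpu : P' = p + (P' - p) := by omega
    have h2p : (0:ℝ) < 2^p := by positivity
    have hcast2 : (((2:ℕ)^p : ℕ):ℝ) = (2:ℝ)^p := by push_cast; ring
    have hcard : ((N/2^p : ℕ):ℝ) ≤ (N:ℝ)/2^p := by
      rw [show ((2:ℝ))^p = (((2^p : ℕ)):ℝ) by push_cast; ring]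
      exact Nat.cast_div_le
    have hinv : (4:ℝ)^(q*q) * (((2:ℕ)^p : ℕ):ℝ)^q / (ath p/δ)^(2*q)
        = (4:ℝ)^(q*q) * (2:ℝ)^(p*q) * (δ/(ath p))^(2*q) := by
      rw [hcast2, ← pow_mul, div_eq_mul_inv, ← inv_pow, inv_div]
    have hbig : (N:ℝ)/2^p * ((4:ℝ)^(q*q) * (2:ℝ)^(p*q) * (δ/(ath p))^(2*q))
        = Cfac * ρ^(P'-p) := by
      rw [hath, hCfac, hρ, hq']
      have := level_eq (N:ℝ) A δ hApos.ne' hδ0.ne' q' p (P'-p)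
      calc (N:ℝ)/2^p * ((4:ℝ)^((q'+1)*(q'+1)) * (2:ℝ)^(p*(q'+1)) *
              (δ/(A * (3/4:ℝ)^(P'-p)))^(2*(q'+1)))
          = ((N:ℝ) * 4^((q'+1)*(q'+1)) * (δ/A)^(2*(q'+1)) * 2^((p+(P'-p))*q'))
              * (2*(8/9:ℝ)^(q'+1))^(P'-p) := this
        _ = ((N:ℝ) * 4^((q'+1)*(q'+1)) * (δ/A)^(2*(q'+1)) * 2^(P'*q'))
              * (2*(8/9:ℝ)^(q'+1))^(P'-p) := by
            rw [← hpu]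
    calc ((N/2^p : ℕ):ℝ) * ((4:ℝ)^(q*q) * (((2:ℕ)^p : ℕ):ℝ)^q / (ath p/δ)^(2*q))
        ≤ (N:ℝ)/2^p * ((4:ℝ)^(q*q) * (((2:ℕ)^p : ℕ):ℝ)^q / (ath p/δ)^(2*q)) := by
          apply mul_le_mul_of_nonneg_right hcard
          have := hathpos p
          positivity
      _ = (N:ℝ)/2^p * ((4:ℝ)^(q*q) * (2:ℝ)^(p*q) * (δ/(ath p))^(2*q)) := by rw [hinv]
      _ = Cfac * ρ^(P'-p) := hbig
  have hsumbound : ∑ p ∈ Finset.range (P'+1),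
      ((N/2^p : ℕ):ℝ) * ((4:ℝ)^(q*q) * (((2:ℕ)^p : ℕ):ℝ)^q / (ath p/δ)^(2*q))
        ≤ Cfac * 2 := by
    calc ∑ p ∈ Finset.range (P'+1),
          ((N/2^p : ℕ):ℝ) * ((4:ℝ)^(q*q) * (((2:ℕ)^p : ℕ):ℝ)^q / (ath p/δ)^(2*q))
        ≤ ∑ p ∈ Finset.range (P'+1), Cfac * ρ^(P'-p) := Finset.sum_le_sum hgle
      _ = Cfac * ∑ p ∈ Finset.range (P'+1), ρ^(P'-p) := by rw [Finset.mul_sum]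
      _ = Cfac * ∑ u ∈ Finset.range (P'+1), ρ^u := by
          congr 1
          rw [← Finset.sum_range_reflect (fun u => ρ^u) (P'+1)]
          apply Finset.sum_congr rfl
          intro p hp
          rw [Finset.mem_range] at hp
          congr 1 <;> omega
      _ ≤ Cfac * (1/(1-ρ)) :=
          mul_le_mul_of_nonneg_left
            (geom_sum_le_inv ρ hρpos.le (by linarith) (P'+1)) hCfacnn
      _ ≤ Cfac * 2 := by
          apply mul_le_mul_of_nonneg_left _ hCfacnn
          rw [div_le_iff₀ (by linarith)]
          linarith
  -- STEP 4 : final simplification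
  have hfinal : Cfac * 2 ≤ (c - 1) * Δ^r := by
    have h2P'q : (2:ℝ)^(P'*q') ≤ (26*(Δ^β/δ^2))^q' := by
      rw [pow_mul]
      exact pow_le_pow_left₀ (by positivity) h2P' q'
    have hC1 : Cfac ≤ (2/δ^2) * 4^(q*q) * (δ/A)^(2*q) * (26*(Δ^β/δ^2))^q' := by
      rw [hCfac]
      have hA2 : (0:ℝ) < (δ/A)^(2*q) := by
        have := hApos
        positivity
      have h1 : (N:ℝ) * 4^(q*q) * (δ/A)^(2*q) * 2^(P'*q')
          ≤ (N:ℝ) * 4^(q*q) * (δ/A)^(2*q) * (26*(Δ^β/δ^2))^q' :=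
        mul_le_mul_of_nonneg_left h2P'q (by positivity)
      have h2 : (N:ℝ) * 4^(q*q) * (δ/A)^(2*q) * (26*(Δ^β/δ^2))^q'
          ≤ (2/δ^2) * 4^(q*q) * (δ/A)^(2*q) * (26*(Δ^β/δ^2))^q' := by
        have hpos : (0:ℝ) ≤ 4^(q*q) * (δ/A)^(2*q) * (26*(Δ^β/δ^2))^q' := by
          have := hApos
          positivity
        calc (N:ℝ) * 4^(q*q) * (δ/A)^(2*q) * (26*(Δ^β/δ^2))^q'
            = (N:ℝ) * (4^(q*q) * (δ/A)^(2*q) * (26*(Δ^β/δ^2))^q') := by ring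
          _ ≤ (2/δ^2) * (4^(q*q) * (δ/A)^(2*q) * (26*(Δ^β/δ^2))^q') :=
              mul_le_mul_of_nonneg_right hNr hpos
          _ = (2/δ^2) * 4^(q*q) * (δ/A)^(2*q) * (26*(Δ^β/δ^2))^q' := by ring
      linarith
    have hC2 : (2/δ^2) * 4^(q*q) * (δ/A)^(2*q) * (26*(Δ^β/δ^2))^q'
        = 2 * 4^(q*q) * 32^(2*q) * 26^q' * ((Δ^β)^q' / (Δ^α)^(2*q)) := by
      rw [hA]
      rw [div_div_eq_mul_div]
      rw [mul_pow 26 (Δ^β/δ^2) q', div_pow (Δ^β) (δ^2) q',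
        div_pow (δ*32) (Δ^α) (2*q), mul_pow δ 32 (2*q), hq']
      have hδq : δ^(2*(q'+1)) = (δ^2)^q' * δ^2 := by ring
      field_simp
      ring
    have hexp : (Δ^β)^q' / (Δ^α)^(2*q) = Δ^(β*q' - α*(2*q)) := by
      rw [← Real.rpow_natCast (Δ^β) q', ← Real.rpow_natCast (Δ^α) (2*q),
        ← Real.rpow_mul hΔ.le, ← Real.rpow_mul hΔ.le, ← Real.rpow_sub hΔ]
      push_cast
      ring_nf
    have hexpge : r ≤ β*q' - α*(2*q) := by
      have hcast : ((q':ℕ):ℝ) = ((q:ℕ):ℝ) - 1 := by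
        rw [hq']; push_cast; ring
      have hqc : ((q:ℕ):ℝ) = ((q' + 1 : ℕ):ℝ) := by rw [hq']
      rw [hqc] at hcast
      push_cast at hqr ⊢
      nlinarith
    have hΔle : Δ^(β*q' - α*(2*q)) ≤ Δ^r :=
      Real.rpow_le_rpow_of_exponent_ge hΔ hΔ1.le hexpge
    have hcm1 : c - 1 = 4^(q*q) * 32^(2*q) * 26^q' * 4 := by rw [hc]; ring
    calc Cfac * 2 ≤ ((2/δ^2) * 4^(q*q) * (δ/A)^(2*q) * (26*(Δ^β/δ^2))^q') * 2 := by
          apply mul_le_mul_of_nonneg_right hC1 (by norm_num)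
      _ = (2 * 4^(q*q) * 32^(2*q) * 26^q' * ((Δ^β)^q' / (Δ^α)^(2*q))) * 2 := by rw [hC2]
      _ = (4^(q*q) * 32^(2*q) * 26^q' * 4) * Δ^(β*q' - α*(2*q)) := by
          rw [hexp]; ring
      _ ≤ (4^(q*q) * 32^(2*q) * 26^q' * 4) * Δ^r :=
          mul_le_mul_of_nonneg_left hΔle (by positivity)
      _ = (c - 1) * Δ^r := by rw [hcm1]
  calc (R.P {ω | Δ^α/2 ≤ modulus (rescale δ (R.path ω)) (Δ^β)}).toReal
      ≤ Cfac * 2 := le_trans hT hsumbound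
    _ ≤ (c - 1) * Δ^r := hfinal
    _ ≤ c * Δ^r := by nlinarith

end DyDWPaper
end
end
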